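/- arXiv:math/0505026 — 4 statements merged into one kernel-verified Lean document; each statement's English description precedes it below -/
import Mathlib

section
/- As λ → ∞, the integral ∫₀^∞ exp(-λ(x + x^{-2})) dx is asymptotic to exp(-3λ·2^{-2/3}) · √(2^{4/3}π/(3λ)), i.e., the ratio of the two sides tends to 1. -/
open MeasureTheory Real Filter Set Topology

noncomputable def x0 : ℝ := (2:ℝ) ^ ((1:ℝ)/3)
noncomputable def φ (x : ℝ) : ℝ := (x + x0/2) / x^2

lemma x0_pos : 0 < x0 := rpow_pos_of_pos two_pos _
lemma x0_cube : x0^3 = 2 := by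
  rw [x0, ← rpow_natCast ((2:ℝ)^((1:ℝ)/3)) 3, ← rpow_mul (by norm_num)]
  norm_num
lemma x0_lt_two : x0 < 2 := by
  by_contra h
  push_neg at h
  have h2 : 4 ≤ x0^2 := by nlinarith
  nlinarith [x0_cube]
lemma h23 : (2:ℝ) ^ (-(2:ℝ)/3) = x0/2 := by
  rw [x0, show (-(2:ℝ)/3) = (1:ℝ)/3 - 1 by norm_num, rpow_sub two_pos, rpow_one]
lemma h43 : (2:ℝ) ^ ((4:ℝ)/3) = 2*x0 := by
  rw [x0, show ((4:ℝ)/3) = 1 + (1:ℝ)/3 by norm_num, rpow_add two_pos, rpow_one]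

lemma g_id {x : ℝ} (hx : 0 < x) : x + 1/x^2 - 3*x0/2 = (x - x0)^2 * φ x := by
  rw [φ]
  field_simp
  ring_nf
  nlinarith [x0_cube]

lemma phi_lb {x : ℝ} (hx : 0 < x) (hx2 : x ≤ 2*x0) : 1/4 ≤ φ x := by
  rw [φ, le_div_iff₀ (by positivity)]
  nlinarith [x0_pos, x0_lt_two]

lemma case2 {x : ℝ} (hx2 : 2*x0 ≤ x) : (x - x0)/2 ≤ (x - x0)^2 * φ x := by
  have h0 := x0_pos
  have hx : 0 < x := lt_of_lt_of_le (by positivity) hx2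
  rw [φ, mul_div_assoc', le_div_iff₀ (by positivity)]
  have hxx : x0 ≤ x - x0 := by linarith
  have hd : 0 < x - x0 := by linarith
  have hd2 : x0*x0 ≤ (x-x0)*(x-x0) := mul_le_mul hxx hxx h0.le (by linarith)
  have key : 0 ≤ (x-x0)^2 + (x-x0)*x0 - x0^2 := by nlinarith [hd2]
  nlinarith [mul_nonneg hd.le key]

lemma shift (f : ℝ → ℝ) (a c : ℝ) : ∫ x in Ioi a, f (x + c) = ∫ x in Ioi (a + c), f x := by
  have h := (measurePreserving_add_right (volume : Measure ℝ) c).setIntegral_preimage_emb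
    (measurableEmbedding_addRight c) f (Ioi (a + c))
  simpa using h

noncomputable def F (l : ℝ) (u : ℝ) : ℝ :=
  Set.indicator (Ioi (-(Real.sqrt l * x0))) (fun u => rexp (-(u^2 * φ (x0 + u / Real.sqrt l)))) u

lemma subst {l : ℝ} (hl : 0 < l) :
    ∫ u : ℝ, F l u = Real.sqrt l * ∫ x in Ioi (0:ℝ), rexp (-(l * ((x - x0)^2 * φ x))) := by
  have hs : 0 < Real.sqrt l := Real.sqrt_pos.2 hl
  have hb : 0 < (Real.sqrt l)⁻¹ := inv_pos.2 hs
  simp only [F]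
  rw [integral_indicator measurableSet_Ioi]
  have h1 : ∀ u : ℝ, rexp (-(u^2 * φ (x0 + u / Real.sqrt l)))
      = (fun y => rexp (-(l * y^2 * φ (x0 + y)))) ((Real.sqrt l)⁻¹ * u) := by
    intro u
    simp only []
    rw [div_eq_inv_mul]
    congr 1
    have : l * ((Real.sqrt l)⁻¹ * u)^2 = u^2 := by
      rw [mul_pow, ← mul_assoc]
      rw [show l * ((Real.sqrt l)⁻¹)^2 = 1 by
        rw [inv_pow, ← Real.sq_sqrt hl.le]; field_simp; rw [Real.sqrt_sq hs.le]]
      ring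
    rw [this]
  calc ∫ u in Ioi (-(Real.sqrt l * x0)), rexp (-(u^2 * φ (x0 + u / Real.sqrt l)))
      = ∫ u in Ioi (-(Real.sqrt l * x0)),
          (fun y => rexp (-(l * y^2 * φ (x0 + y)))) ((Real.sqrt l)⁻¹ * u) := by
        exact integral_congr_ae (Eventually.of_forall fun u => h1 u) |>.symm ▸ rfl
    _ = ((Real.sqrt l)⁻¹)⁻¹ • ∫ y in Ioi ((Real.sqrt l)⁻¹ * (-(Real.sqrt l * x0))),
          rexp (-(l * y^2 * φ (x0 + y))) :=
        integral_comp_mul_left_Ioi (fun y => rexp (-(l * y^2 * φ (x0 + y)))) _ hb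
    _ = Real.sqrt l * ∫ x in Ioi (0:ℝ), rexp (-(l * ((x - x0)^2 * φ x))) := by
        rw [inv_inv, smul_eq_mul]
        congr 1
        have : (Real.sqrt l)⁻¹ * (-(Real.sqrt l * x0)) = -x0 := by
          rw [mul_neg, ← mul_assoc, inv_mul_cancel₀ hs.ne']
          ring
        rw [this]
        have := shift (fun x => rexp (-(l * ((x - x0)^2 * φ x)))) (-x0) x0
        simp only [neg_add_cancel] at this
        rw [← this]
        refine setIntegral_congr_fun measurableSet_Ioi fun y _ => ?_
        congr 1
        ring_nf

noncomputable def D (u : ℝ) : ℝ :=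
  rexp (-(u^2/4)) + Set.indicator (Ioi (0:ℝ)) (fun u => rexp (-(u/2))) u

lemma D_integrable : Integrable D := by
  refine Integrable.add ?_ ?_
  · have := integrable_exp_neg_mul_sq (show (0:ℝ) < 1/4 by norm_num)
    refine this.congr (Eventually.of_forall fun x => ?_)
    ring_nf
  · refine IntegrableOn.integrable_indicator ?_ measurableSet_Ioi
    have := exp_neg_integrableOn_Ioi (0:ℝ) (show (0:ℝ) < 1/2 by norm_num)
    refine this.congr_fun (fun x _ => ?_) measurableSet_Ioi
    ring_nf

lemma F_meas (l : ℝ) : AEStronglyMeasurable (F l) volume := by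
  refine (Measurable.indicator ?_ measurableSet_Ioi).aestronglyMeasurable
  simp only [φ]
  fun_prop

lemma F_bound {l : ℝ} (hl : 1 ≤ l) (u : ℝ) : ‖F l u‖ ≤ D u := by
  have hDnn : 0 ≤ Set.indicator (Ioi (0:ℝ)) (fun u => rexp (-(u/2))) u :=
    Set.indicator_nonneg (fun x _ => (exp_pos _).le) u
  have hGnn : (0:ℝ) ≤ rexp (-(u^2/4)) := (exp_pos _).le
  rw [F]
  by_cases hu : u ∈ Ioi (-(Real.sqrt l * x0))
  · rw [Set.indicator_of_mem hu, Real.norm_eq_abs, abs_of_pos (exp_pos _)]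
    have hl0 : (0:ℝ) < l := lt_of_lt_of_le one_pos hl
    have hs1 : 1 ≤ Real.sqrt l := by
      rw [show (1:ℝ) = Real.sqrt 1 by simp]; exact Real.sqrt_le_sqrt hl
    have hs : 0 < Real.sqrt l := lt_of_lt_of_le one_pos hs1
    set x := x0 + u / Real.sqrt l with hxdef
    have hxpos : 0 < x := by
      have : -x0 < u / Real.sqrt l := by
        rw [lt_div_iff₀ hs]
        rw [mem_Ioi] at hu
        nlinarith
      simp only [hxdef]; linarith
    have hu_eq : u = Real.sqrt l * (x - x0) := by
      simp only [hxdef]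
      field_simp
      ring
    have hsq : Real.sqrt l * Real.sqrt l = l := Real.mul_self_sqrt hl0.le
    have hkey : u^2 * φ x = l * ((x - x0)^2 * φ x) := by
      rw [hu_eq]; ring_nf; rw [Real.sq_sqrt hl0.le]; ring
    by_cases hx2 : x ≤ 2*x0
    · have h1 : u^2/4 ≤ u^2 * φ x := by
        have := phi_lb hxpos hx2
        nlinarith [sq_nonneg u]
      calc rexp (-(u^2 * φ x)) ≤ rexp (-(u^2/4)) := by
            apply exp_le_exp.2; linarith
        _ ≤ D u := by rw [D]; linarith
    · push_neg at hx2
      have hd : 0 < x - x0 := by nlinarith [x0_pos]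
      have hupos : 0 < u := by
        rw [hu_eq]; positivity
      have h2 : u/2 ≤ u^2 * φ x := by
        rw [hkey, hu_eq]
        have hc := case2 hx2.le
        have hsl : Real.sqrt l ≤ l := by
          calc Real.sqrt l = Real.sqrt l * 1 := by ring
            _ ≤ Real.sqrt l * Real.sqrt l := by nlinarith
            _ = l := hsq
        calc Real.sqrt l * (x - x0) / 2 ≤ l * ((x - x0)/2) := by
              have h9 := mul_le_mul_of_nonneg_right hsl hd.le
              rw [show l * ((x - x0)/2) = l * (x - x0)/2 by ring]
              exact div_le_div_of_nonneg_right h9 (by norm_num) |>.trans_eq rfl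
          _ ≤ l * ((x - x0)^2 * φ x) := by
              apply mul_le_mul_of_nonneg_left hc hl0.le
      calc rexp (-(u^2 * φ x)) ≤ rexp (-(u/2)) := by
            apply exp_le_exp.2; linarith
        _ = Set.indicator (Ioi (0:ℝ)) (fun u => rexp (-(u/2))) u := by
            rw [Set.indicator_of_mem (mem_Ioi.2 hupos)]
        _ ≤ D u := by rw [D]; linarith
  · rw [Set.indicator_of_notMem hu, norm_zero, D]
    positivity

lemma sqrt_tendsto : Tendsto (fun l : ℝ => Real.sqrt l) atTop atTop := by
  apply tendsto_atTop_atTop.2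
  intro b
  refine ⟨(max b 0)^2, fun a ha => ?_⟩
  calc b ≤ max b 0 := le_max_left _ _
    _ = Real.sqrt ((max b 0)^2) := (Real.sqrt_sq (le_max_right _ _)).symm
    _ ≤ Real.sqrt a := Real.sqrt_le_sqrt ha

lemma phi_x0 : φ x0 = 3/(2*x0) := by
  rw [φ]
  have := x0_pos
  field_simp
  ring

lemma phi_cont : ContinuousAt φ x0 := by
  apply ContinuousAt.div (by fun_prop) (by fun_prop)
  exact pow_ne_zero 2 x0_pos.ne'

lemma F_tendsto (u : ℝ) : Tendsto (fun l => F l u) atTop (𝓝 (rexp (-(3/(2*x0)) * u^2))) := by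
  have hx : Tendsto (fun l : ℝ => x0 + u / Real.sqrt l) atTop (𝓝 x0) := by
    have : Tendsto (fun l : ℝ => u / Real.sqrt l) atTop (𝓝 0) :=
      Tendsto.div_atTop tendsto_const_nhds sqrt_tendsto
    simpa using tendsto_const_nhds.add this
  have hphi : Tendsto (fun l : ℝ => φ (x0 + u / Real.sqrt l)) atTop (𝓝 (3/(2*x0))) := by
    rw [← phi_x0]
    exact phi_cont.tendsto.comp hx
  have hmain : Tendsto (fun l : ℝ => rexp (-(u^2 * φ (x0 + u / Real.sqrt l)))) atTop
      (𝓝 (rexp (-(3/(2*x0)) * u^2))) := by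
    have : Tendsto (fun l : ℝ => -(u^2 * φ (x0 + u / Real.sqrt l))) atTop
        (𝓝 (-(3/(2*x0)) * u^2)) := by
      have h2 := (hphi.const_mul (u^2)).neg
      convert h2 using 2
      ring
    exact (Real.continuous_exp.tendsto _).comp this
  apply hmain.congr'
  have hev : ∀ᶠ l : ℝ in atTop, -(Real.sqrt l * x0) < u := by
    have : Tendsto (fun l : ℝ => Real.sqrt l * x0) atTop atTop :=
      sqrt_tendsto.atTop_mul_const x0_pos
    filter_upwards [this.eventually_gt_atTop (-u)] with l hl
    linarith
  filter_upwards [hev] with l hl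
  rw [F, Set.indicator_of_mem (mem_Ioi.2 hl)]

lemma key : Tendsto (fun l : ℝ => Real.sqrt l * ∫ x in Ioi (0:ℝ),
    rexp (-(l * ((x - x0)^2 * φ x)))) atTop (𝓝 (Real.sqrt (π / (3/(2*x0))))) := by
  have h := tendsto_integral_filter_of_dominated_convergence (μ := volume) (l := atTop)
    (F := F) (f := fun u => rexp (-(3/(2*x0)) * u^2)) D
    (Eventually.of_forall F_meas)
    (by filter_upwards [eventually_ge_atTop (1:ℝ)] with l hl
        exact ae_of_all _ (F_bound hl))
    D_integrable
    (ae_of_all _ F_tendsto)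
  rw [integral_gaussian] at h
  apply h.congr'
  filter_upwards [eventually_gt_atTop (0:ℝ)] with l hl
  exact subst hl

/-- As `λ → ∞`, `∫₀^∞ exp(-λ(x + x⁻²)) dx ~ exp(-3λ·2^{-2/3}) √(2^{4/3}π/(3λ))`. -/
theorem laplace_asymptotic_x_add_inv_sq :
    Tendsto (fun l : ℝ =>
        (∫ x in Set.Ioi (0:ℝ), Real.exp (-l * (x + 1 / x ^ 2))) /
          (Real.exp (-3 * l * (2:ℝ) ^ (-(2:ℝ)/3)) *
            Real.sqrt ((2:ℝ) ^ ((4:ℝ)/3) * π / (3 * l))))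
      atTop (nhds 1) := by
  have hx0 := x0_pos
  have hS : (0:ℝ) < Real.sqrt (π / (3/(2*x0))) := by
    apply Real.sqrt_pos.2
    positivity
  have h := key.div_const (Real.sqrt (π / (3/(2*x0))))
  rw [div_self hS.ne'] at h
  apply h.congr'
  filter_upwards [eventually_gt_atTop (0:ℝ)] with l hl
  have hs : 0 < Real.sqrt l := Real.sqrt_pos.2 hl
  -- numerator
  have hnum : (∫ x in Set.Ioi (0:ℝ), Real.exp (-l * (x + 1 / x ^ 2)))
      = rexp (-(l * (3*x0/2))) * ∫ x in Ioi (0:ℝ), rexp (-(l * ((x - x0)^2 * φ x))) := by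
    rw [← integral_const_mul]
    refine setIntegral_congr_fun measurableSet_Ioi fun x hx => ?_
    rw [← Real.exp_add, ← g_id (mem_Ioi.1 hx)]
    congr 1
    ring
  -- denominator
  have hden : Real.exp (-3 * l * (2:ℝ) ^ (-(2:ℝ)/3)) *
        Real.sqrt ((2:ℝ) ^ ((4:ℝ)/3) * π / (3 * l))
      = rexp (-(l * (3*x0/2))) * (Real.sqrt (π / (3/(2*x0))) / Real.sqrt l) := by
    rw [h23, h43]
    congr 1
    · congr 1
      ring
    · rw [← Real.sqrt_div (by positivity) l]
      congr 1
      field_simp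
  rw [hnum, hden]
  rw [mul_div_mul_left _ _ (Real.exp_pos _).ne']
  rw [div_div_eq_mul_div, mul_comm]
  field_simp
end

section
/- Let a, b > 0. As t → ∞, ∫₀^∞ exp(-at/u² - bu) du is asymptotic to √(π/3) · 2^{2/3} · a^{1/6} · b^{-2/3} · t^{1/6} · exp(-3 a^{1/3} b^{2/3} 2^{-2/3} t^{1/3}). -/
open MeasureTheory Real Filter Set


noncomputable def gL (v : ℝ) : ℝ := v + 1 / (2 * v ^ 2)

lemma gL_sub {v : ℝ} (hv : 0 < v) :
    gL v - 3 / 2 = (v - 1) ^ 2 * (2 * v + 1) / (2 * v ^ 2) := by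
  simp only [gL]; field_simp; ring

lemma gL_nonneg {v : ℝ} (hv : 0 < v) : 0 ≤ gL v - 3 / 2 := by
  rw [gL_sub hv]; positivity

lemma gL_lb1 {v : ℝ} (h0 : 0 < v) (h2 : v ≤ 2) : (v - 1) ^ 2 / 2 ≤ gL v - 3 / 2 := by
  rw [gL_sub h0, div_le_div_iff₀ (by norm_num) (by positivity)]
  have key : (v - 1) ^ 2 ≤ 1 := by nlinarith
  nlinarith [mul_nonneg (sq_nonneg (v - 1)) (sub_nonneg.2 key), sq_nonneg (v - 1)]

lemma gL_lb2 {v : ℝ} (h2 : 2 ≤ v) : v / 4 ≤ gL v - 3 / 2 := by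
  have hv : (0:ℝ) < v := by linarith
  have h : 0 < 1 / (2 * v ^ 2) := by positivity
  simp only [gL]; linarith

lemma bound_small {l r s : ℝ} (hr0 : 0 < r) (hr2 : r ^ 2 = l) (hsr : -r < s) (hc : s ≤ r) :
    1 / 2 * s ^ 2 ≤ l * (gL (1 + s / r) - 3 / 2) := by
  subst hr2
  have hv0 : 0 < 1 + s / r := by
    have : -1 < s / r := by
      rw [neg_lt, ← neg_div]; exact (div_lt_one hr0).2 (by linarith)
    linarith
  have hv2 : 1 + s / r ≤ 2 := by
    have : s / r ≤ 1 := (div_le_one hr0).2 hc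
    linarith
  have hlow := gL_lb1 hv0 hv2
  have heq : (1 + s / r - 1) ^ 2 / 2 = s ^ 2 / r ^ 2 / 2 := by
    rw [add_sub_cancel_left, div_pow]
  rw [heq] at hlow
  have := mul_le_mul_of_nonneg_left hlow (by positivity : (0:ℝ) ≤ r ^ 2)
  calc 1 / 2 * s ^ 2 = r ^ 2 * (s ^ 2 / r ^ 2 / 2) := by
        field_simp
    _ ≤ r ^ 2 * (gL (1 + s / r) - 3 / 2) := this

lemma bound_large {l r s : ℝ} (hr1 : 1 ≤ r) (hr2 : r ^ 2 = l) (hc : r ≤ s) :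
    1 / 4 * s ≤ l * (gL (1 + s / r) - 3 / 2) := by
  subst hr2
  have hr0 : (0:ℝ) < r := by linarith
  have hs0 : 0 ≤ s := le_trans (by linarith) hc
  have hv2 : 2 ≤ 1 + s / r := by
    have : 1 ≤ s / r := (one_le_div hr0).2 hc
    linarith
  have hlow := gL_lb2 hv2
  have h1 : r ^ 2 * ((1 + s / r) / 4) ≤ r ^ 2 * (gL (1 + s / r) - 3 / 2) :=
    mul_le_mul_of_nonneg_left hlow (by positivity)
  have h2 : r ^ 2 * ((1 + s / r) / 4) = (r ^ 2 + r * s) / 4 := by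
    field_simp
  have h3 : s ≤ r * s := le_mul_of_one_le_left hs0 hr1
  nlinarith [sq_nonneg r]

lemma exponent_eq {l r s : ℝ} (hr0 : 0 < r) (hr2 : r ^ 2 = l) (hv0 : 0 < 1 + s / r) :
    l * (gL (1 + s / r) - 3 / 2) = s ^ 2 * (2 * (1 + s / r) + 1) / (2 * (1 + s / r) ^ 2) := by
  subst hr2
  rw [gL_sub hv0, add_sub_cancel_left, div_pow, ← mul_div_assoc]
  congr 1
  field_simp

lemma sqrt_tendsto_atTop : Tendsto Real.sqrt atTop atTop := by
  refine Tendsto.congr' ?_ (tendsto_rpow_atTop (by norm_num : (0:ℝ) < 1/2))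
  filter_upwards [eventually_ge_atTop (0:ℝ)] with x hx
  rw [← Real.sqrt_eq_rpow]

lemma laplace_key :
    Tendsto (fun l : ℝ => ∫ s : ℝ,
        Set.indicator (Ioi (-Real.sqrt l))
          (fun s => Real.exp (-(l * (gL (1 + s / Real.sqrt l) - 3 / 2)))) s)
      atTop (nhds (Real.sqrt (π / (3 / 2)))) := by
  rw [← integral_gaussian (3/2 : ℝ)]
  apply tendsto_integral_filter_of_dominated_convergence
      (bound := fun s => Real.exp (-(1/2) * s ^ 2) +
        Set.indicator (Ici 0) (fun s => Real.exp (-(1/4) * s)) s)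
  · filter_upwards with l
    refine (Measurable.indicator ?_ measurableSet_Ioi).aestronglyMeasurable
    have hg : Measurable gL := by unfold gL; measurability
    measurability
  · filter_upwards [eventually_ge_atTop (1:ℝ)] with l hl
    refine ae_of_all _ fun s => ?_
    have hl0 : (0:ℝ) < l := by linarith
    have hr1 : 1 ≤ Real.sqrt l := Real.one_le_sqrt.2 hl
    have hr0 : 0 < Real.sqrt l := by linarith
    have hr2 : Real.sqrt l ^ 2 = l := Real.sq_sqrt hl0.le
    have hind : 0 ≤ Set.indicator (Ici 0) (fun s => Real.exp (-(1/4) * s)) s :=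
      Set.indicator_nonneg (fun x _ => (Real.exp_pos _).le) s
    have hexp : (0:ℝ) ≤ Real.exp (-(1/2) * s ^ 2) := (Real.exp_pos _).le
    by_cases hs : s ∈ Ioi (-Real.sqrt l)
    · rw [Set.indicator_of_mem hs, Real.norm_eq_abs, abs_of_pos (Real.exp_pos _)]
      by_cases hcase : s ≤ Real.sqrt l
      · have := bound_small hr0 hr2 hs hcase
        have h := Real.exp_le_exp.2 (neg_le_neg this)
        calc Real.exp (-(l * (gL (1 + s / Real.sqrt l) - 3 / 2)))
            ≤ Real.exp (-(1/2 * s ^ 2)) := h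
          _ = Real.exp (-(1/2) * s ^ 2) := by ring_nf
          _ ≤ _ := le_add_of_nonneg_right hind
      · push_neg at hcase
        have hs0 : (0:ℝ) ≤ s := le_trans (by linarith) hcase.le
        have := bound_large hr1 hr2 hcase.le
        have h := Real.exp_le_exp.2 (neg_le_neg this)
        have hind' : Set.indicator (Ici 0) (fun s => Real.exp (-(1/4) * s)) s
            = Real.exp (-(1/4) * s) := Set.indicator_of_mem hs0 _
        calc Real.exp (-(l * (gL (1 + s / Real.sqrt l) - 3 / 2)))
            ≤ Real.exp (-(1/4 * s)) := h
          _ = Real.exp (-(1/4) * s) := by ring_nf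
          _ ≤ _ := by rw [hind']; linarith
    · rw [Set.indicator_of_notMem hs, norm_zero]
      linarith
  · refine (integrable_exp_neg_mul_sq (by norm_num : (0:ℝ) < 1/2)).add ?_
    rw [integrable_indicator_iff measurableSet_Ici, integrableOn_Ici_iff_integrableOn_Ioi]
    exact exp_neg_integrableOn_Ioi (0:ℝ) (by norm_num : (0:ℝ) < 1/4)
  · refine ae_of_all _ fun s => ?_
    have h0 : Tendsto (fun l : ℝ => s / Real.sqrt l) atTop (nhds 0) :=
      Tendsto.div_atTop tendsto_const_nhds sqrt_tendsto_atTop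
    have hc : ContinuousAt
        (fun w : ℝ => Real.exp (-(s ^ 2 * (2 * (1 + w) + 1) / (2 * (1 + w) ^ 2)))) 0 := by
      apply Real.continuous_exp.continuousAt.comp
      apply ContinuousAt.neg
      apply ContinuousAt.div
      · fun_prop
      · fun_prop
      · norm_num
    have hval : Real.exp (-(s ^ 2 * (2 * (1 + (0:ℝ)) + 1) / (2 * (1 + (0:ℝ)) ^ 2)))
        = Real.exp (-(3/2) * s ^ 2) := by norm_num; ring_nf
    have htt : Tendsto
        (fun l : ℝ => Real.exp (-(s ^ 2 * (2 * (1 + s / Real.sqrt l) + 1) /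
          (2 * (1 + s / Real.sqrt l) ^ 2)))) atTop (nhds (Real.exp (-(3/2) * s ^ 2))) := by
      rw [← hval]
      exact (hc.tendsto).comp h0
    refine Tendsto.congr' ?_ htt
    filter_upwards [eventually_gt_atTop (max 1 (s ^ 2))] with l hlm
    have hl1 : (1:ℝ) < l := lt_of_le_of_lt (le_max_left _ _) hlm
    have hls : s ^ 2 < l := lt_of_le_of_lt (le_max_right _ _) hlm
    have hl0 : (0:ℝ) < l := by linarith
    have hr2 : Real.sqrt l ^ 2 = l := Real.sq_sqrt hl0.le
    have hr0 : 0 < Real.sqrt l := Real.sqrt_pos.2 hl0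
    have habs : |s| < Real.sqrt l := Real.lt_sqrt_of_sq_lt (by simpa [sq_abs] using hls)
    obtain ⟨ha1, ha2⟩ := abs_lt.1 habs
    have hmem : s ∈ Ioi (-Real.sqrt l) := by simpa using ha1
    have hv0 : 0 < 1 + s / Real.sqrt l := by
      have : -1 < s / Real.sqrt l := by
        rw [neg_lt, ← neg_div]; exact (div_lt_one hr0).2 (by linarith)
      linarith
    rw [Set.indicator_of_mem hmem]
    rw [exponent_eq hr0 hr2 hv0]



lemma shift_Ioi (f : ℝ → ℝ) (d a : ℝ) :
    (∫ x in Ioi a, f (d + x)) = ∫ x in Ioi (d + a), f x := by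
  rw [← integral_indicator measurableSet_Ioi, ← integral_indicator measurableSet_Ioi,
    ← integral_add_left_eq_self (Set.indicator (Ioi (d + a)) f) d]
  congr 1
  ext x
  by_cases h : x ∈ Ioi a
  · rw [Set.indicator_of_mem h, Set.indicator_of_mem]
    simp only [mem_Ioi] at h ⊢; linarith
  · rw [Set.indicator_of_notMem h, Set.indicator_of_notMem]
    simp only [mem_Ioi, not_lt] at h ⊢; linarith

lemma phase (b c v : ℝ) (hb : 0 < b) (hc : 0 < c) (hv : 0 < v) :
    -(b * c ^ 3 / 2) / (c * v) ^ 2 - b * (c * v)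
      = -(3 * (b * c) / 2) + -(b * c * (gL v - 3/2)) := by
  simp only [gL]; field_simp; ring

lemma subst_eq (a b t : ℝ) (ha : 0 < a) (hb : 0 < b) (ht : 0 < t) :
    (∫ u in Ioi (0:ℝ), Real.exp (-(a * t) / u ^ 2 - b * u))
      = ((2*a*t/b) ^ ((1:ℝ)/3) / Real.sqrt (b * (2*a*t/b) ^ ((1:ℝ)/3)))
        * Real.exp (-(3 * (b * (2*a*t/b) ^ ((1:ℝ)/3)) / 2))
        * ∫ s, Set.indicator (Ioi (-Real.sqrt (b * (2*a*t/b) ^ ((1:ℝ)/3))))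
            (fun s => Real.exp (-(b * (2*a*t/b) ^ ((1:ℝ)/3) *
              (gL (1 + s / Real.sqrt (b * (2*a*t/b) ^ ((1:ℝ)/3))) - 3/2)))) s := by
  set c := (2*a*t/b) ^ ((1:ℝ)/3) with hcdef
  have hP : 0 < 2*a*t/b := by positivity
  have hc0 : 0 < c := Real.rpow_pos_of_pos hP _
  have hc3 : c ^ 3 = 2*a*t/b := by
    rw [hcdef, ← Real.rpow_natCast ((2*a*t/b) ^ ((1:ℝ)/3)) 3, ← Real.rpow_mul hP.le]
    norm_num
  have hat : a * t = b * c ^ 3 / 2 := by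
    rw [hc3]; field_simp
  have hl0 : 0 < b * c := by positivity
  set r := Real.sqrt (b * c) with hrdef
  have hr0 : 0 < r := Real.sqrt_pos.2 hl0
  have hr2 : r ^ 2 = b * c := Real.sq_sqrt hl0.le
  have hcr : 0 < c / r := by positivity
  rw [integral_indicator measurableSet_Ioi]
  have key : ∀ s ∈ Ioi (-r),
      Real.exp (-(3 * (b * c) / 2)) * Real.exp (-(b * c * (gL (1 + s / r) - 3/2)))
        = Real.exp (-(a*t) / (c + s * (c / r)) ^ 2 - b * (c + s * (c/r))) := by
    intro s hs
    have hsr : -1 < s / r := by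
      rw [neg_lt, ← neg_div]
      exact (div_lt_one hr0).2 (by simpa [neg_lt] using hs)
    have hv0 : 0 < 1 + s / r := by linarith
    rw [← Real.exp_add]
    congr 1
    have hu : c + s * (c / r) = c * (1 + s / r) := by field_simp
    rw [hu, hat]
    exact (phase b c _ hb hc0 hv0).symm
  calc (∫ u in Ioi (0:ℝ), Real.exp (-(a * t) / u ^ 2 - b * u))
      = ∫ x in Ioi (c + -c), Real.exp (-(a * t) / x ^ 2 - b * x) := by norm_num
    _ = ∫ x in Ioi (-c), Real.exp (-(a*t) / (c + x) ^ 2 - b * (c + x)) :=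
        (shift_Ioi (fun x => Real.exp (-(a * t) / x ^ 2 - b * x)) c (-c)).symm
    _ = (c/r) * ((c/r)⁻¹ • ∫ x in Ioi (-c),
          Real.exp (-(a*t) / (c + x) ^ 2 - b * (c + x))) := by
        rw [smul_eq_mul, ← mul_assoc, mul_inv_cancel₀ hcr.ne', one_mul]
    _ = (c/r) * ∫ s in Ioi (-r),
          Real.exp (-(a*t) / (c + s * (c/r)) ^ 2 - b * (c + s * (c/r))) := by
        have hneg : -r * (c/r) = -c := by field_simp
        rw [integral_comp_mul_right_Ioi
          (fun x => Real.exp (-(a*t) / (c + x) ^ 2 - b * (c + x))) (-r) hcr, hneg]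
    _ = (c/r) * ∫ s in Ioi (-r),
          Real.exp (-(3 * (b * c) / 2)) * Real.exp (-(b * c * (gL (1 + s / r) - 3/2))) := by
        congr 1
        exact (setIntegral_congr_fun measurableSet_Ioi key).symm
    _ = (c/r) * Real.exp (-(3 * (b * c) / 2))
          * ∫ s in Ioi (-r), Real.exp (-(b * c * (gL (1 + s / r) - 3/2))) := by
        rw [integral_const_mul, mul_assoc]


lemma pos_eq_of_log {x y : ℝ} (hx : 0 < x) (hy : 0 < y) (h : Real.log x = Real.log y) :
    x = y := by
  rw [← Real.exp_log hx, ← Real.exp_log hy, h]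

lemma expo_eq (a b t : ℝ) (ha : 0 < a) (hb : 0 < b) (ht : 0 < t) :
    3 * (b * (2*a*t/b) ^ ((1:ℝ)/3)) / 2
      = 3 * a ^ ((1:ℝ)/3) * b ^ ((2:ℝ)/3) * (2:ℝ) ^ (-(2:ℝ)/3) * t ^ ((1:ℝ)/3) := by
  have hP : 0 < 2*a*t/b := by positivity
  have lP : Real.log (2*a*t/b) = Real.log 2 + Real.log a + Real.log t - Real.log b := by
    rw [Real.log_div (by positivity) hb.ne', Real.log_mul (by positivity) ht.ne',
      Real.log_mul (by norm_num) ha.ne']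
  apply pos_eq_of_log (by positivity) (by positivity)
  rw [Real.log_div (by positivity) (by norm_num),
    Real.log_mul (by norm_num) (by positivity),
    Real.log_mul hb.ne' (by positivity),
    Real.log_rpow hP, lP,
    Real.log_mul (by positivity) (by positivity),
    Real.log_mul (by positivity) (by positivity),
    Real.log_mul (by positivity) (by positivity),
    Real.log_mul (by norm_num) (by positivity),
    Real.log_rpow ha, Real.log_rpow hb, Real.log_rpow (by norm_num : (0:ℝ) < 2),
    Real.log_rpow ht]
  ring

lemma amp_eq (a b t : ℝ) (ha : 0 < a) (hb : 0 < b) (ht : 0 < t) :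
    (2*a*t/b) ^ ((1:ℝ)/3) / Real.sqrt (b * (2*a*t/b) ^ ((1:ℝ)/3)) * Real.sqrt (π / (3/2))
      = Real.sqrt (π / 3) * (2:ℝ) ^ ((2:ℝ)/3) * a ^ ((1:ℝ)/6) * b ^ (-(2:ℝ)/3)
        * t ^ ((1:ℝ)/6) := by
  have hP : 0 < 2*a*t/b := by positivity
  have hpi := Real.pi_pos
  have lP : Real.log (2*a*t/b) = Real.log 2 + Real.log a + Real.log t - Real.log b := by
    rw [Real.log_div (by positivity) hb.ne', Real.log_mul (by positivity) ht.ne',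
      Real.log_mul (by norm_num) ha.ne']
  have l1 : Real.log ((2*a*t/b) ^ ((1:ℝ)/3))
      = (Real.log 2 + Real.log a + Real.log t - Real.log b) / 3 := by
    rw [Real.log_rpow hP, lP]; ring
  have l2 : Real.log (Real.sqrt (b * (2*a*t/b) ^ ((1:ℝ)/3)))
      = (Real.log b + (Real.log 2 + Real.log a + Real.log t - Real.log b) / 3) / 2 := by
    rw [Real.log_sqrt (by positivity), Real.log_mul hb.ne' (by positivity), l1]
  have l3 : Real.log (Real.sqrt (π / (3/2)))
      = (Real.log π - (Real.log 3 - Real.log 2)) / 2 := by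
    rw [Real.log_sqrt (by positivity), Real.log_div hpi.ne' (by norm_num),
      Real.log_div (by norm_num) (by norm_num)]
  have l4 : Real.log (Real.sqrt (π / 3)) = (Real.log π - Real.log 3) / 2 := by
    rw [Real.log_sqrt (by positivity), Real.log_div hpi.ne' (by norm_num)]
  apply pos_eq_of_log (by positivity) (by positivity)
  rw [Real.log_mul (by positivity) (by positivity),
    Real.log_div (by positivity) (by positivity),
    l1, l2, l3,
    Real.log_mul (by positivity) (by positivity),
    Real.log_mul (by positivity) (by positivity),
    Real.log_mul (by positivity) (by positivity),
    Real.log_mul (by positivity) (by positivity),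
    l4, Real.log_rpow (by norm_num : (0:ℝ) < 2),
    Real.log_rpow ha, Real.log_rpow hb, Real.log_rpow ht]
  ring


/-- For `a, b > 0`, as `t → ∞`,
`∫₀^∞ exp(-at/u² - bu) du ~ √(π/3)·2^{2/3}·a^{1/6}·b^{-2/3}·t^{1/6}·exp(-3a^{1/3}b^{2/3}2^{-2/3}t^{1/3})`. -/
theorem laplace_asymptotic_exp_integral (a b : ℝ) (ha : 0 < a) (hb : 0 < b) :
    Tendsto (fun t : ℝ =>
        (∫ u in Set.Ioi (0:ℝ), Real.exp (-(a * t) / u ^ 2 - b * u)) /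
          (Real.sqrt (π / 3) * (2:ℝ) ^ ((2:ℝ)/3) * a ^ ((1:ℝ)/6) * b ^ (-(2:ℝ)/3) *
            t ^ ((1:ℝ)/6) *
            Real.exp (-3 * a ^ ((1:ℝ)/3) * b ^ ((2:ℝ)/3) * (2:ℝ) ^ (-(2:ℝ)/3) * t ^ ((1:ℝ)/3))))
      atTop (nhds 1) := by
  have hpi := Real.pi_pos
  have hlim : Tendsto (fun t : ℝ => b * (2*a*t/b) ^ ((1:ℝ)/3)) atTop atTop := by
    apply Tendsto.const_mul_atTop hb
    have hinner : Tendsto (fun t : ℝ => 2*a*t/b) atTop atTop := by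
      have : (fun t : ℝ => 2*a*t/b) = fun t : ℝ => (2*a/b) * t := by
        funext t; ring
      rw [this]
      exact Tendsto.const_mul_atTop (by positivity) tendsto_id
    exact (tendsto_rpow_atTop (by norm_num : (0:ℝ) < 1/3)).comp hinner
  have hG := laplace_key.comp hlim
  have hsne : Real.sqrt (π / (3/2)) ≠ 0 := by positivity
  have h1 : Tendsto (fun t : ℝ =>
      (∫ s : ℝ, Set.indicator (Ioi (-Real.sqrt (b * (2*a*t/b) ^ ((1:ℝ)/3))))
        (fun s => Real.exp (-(b * (2*a*t/b) ^ ((1:ℝ)/3) *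
          (gL (1 + s / Real.sqrt (b * (2*a*t/b) ^ ((1:ℝ)/3))) - 3/2)))) s)
        / Real.sqrt (π / (3/2))) atTop (nhds 1) := by
    have := hG.div_const (Real.sqrt (π / (3/2)))
    rw [div_self hsne] at this
    exact this
  refine Tendsto.congr' ?_ h1
  filter_upwards [eventually_gt_atTop (0:ℝ)] with t ht
  have hP : 0 < 2*a*t/b := by positivity
  have hc0 : 0 < (2*a*t/b) ^ ((1:ℝ)/3) := Real.rpow_pos_of_pos hP _
  have hl0 : 0 < b * (2*a*t/b) ^ ((1:ℝ)/3) := by positivity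
  have hr0 : 0 < Real.sqrt (b * (2*a*t/b) ^ ((1:ℝ)/3)) := Real.sqrt_pos.2 hl0
  set K := (2*a*t/b) ^ ((1:ℝ)/3) / Real.sqrt (b * (2*a*t/b) ^ ((1:ℝ)/3))
    * Real.exp (-(3 * (b * (2*a*t/b) ^ ((1:ℝ)/3)) / 2)) with hKdef
  have hK : 0 < K := by positivity
  have hD : Real.sqrt (π / 3) * (2:ℝ) ^ ((2:ℝ)/3) * a ^ ((1:ℝ)/6) * b ^ (-(2:ℝ)/3) *
      t ^ ((1:ℝ)/6) *
      Real.exp (-3 * a ^ ((1:ℝ)/3) * b ^ ((2:ℝ)/3) * (2:ℝ) ^ (-(2:ℝ)/3) * t ^ ((1:ℝ)/3))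
      = K * Real.sqrt (π / (3/2)) := by
    rw [hKdef]
    rw [← amp_eq a b t ha hb ht]
    have : -3 * a ^ ((1:ℝ)/3) * b ^ ((2:ℝ)/3) * (2:ℝ) ^ (-(2:ℝ)/3) * t ^ ((1:ℝ)/3)
        = -(3 * (b * (2*a*t/b) ^ ((1:ℝ)/3)) / 2) := by
      have h := expo_eq a b t ha hb ht; linarith
    rw [this]
    ring
  rw [subst_eq a b t ha hb ht, hD, ← hKdef]
  rw [mul_div_mul_left _ _ hK.ne']
end

section
/- Let a, b > 0. As t → ∞, ∫₀^∞ u · exp(-at/u² - bu) du is asymptotic to 2√(π/3) · a^{1/2} · b^{-1} · t^{1/2} · exp(-3 a^{1/3} b^{2/3} 2^{-2/3} t^{1/3}). -/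
open MeasureTheory Real Filter Set

noncomputable def lapG (l s : ℝ) : ℝ :=
  Set.indicator (Set.Ioi (-Real.sqrt l)) (fun s => (1 + s / Real.sqrt l) *
    Real.exp (-(s ^ 2 * (3 + 2 * (s / Real.sqrt l)) / (2 * (1 + s / Real.sqrt l) ^ 2)))) s

lemma pow_inj3 {x y : ℝ} (hx : 0 ≤ x) (hy : 0 ≤ y) (h : x ^ 3 = y ^ 3) : x = y :=
  (pow_left_strictMonoOn₀ three_ne_zero).injOn hx hy h

lemma pow_inj2 {x y : ℝ} (hx : 0 ≤ x) (hy : 0 ≤ y) (h : x ^ 2 = y ^ 2) : x = y :=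
  (pow_left_strictMonoOn₀ two_ne_zero).injOn hx hy h

lemma lapBound_integrable : Integrable (fun s : ℝ => (16 * Real.exp (1/8)) * Real.exp (-(1/16) * |s|)) := by
  apply Integrable.const_mul
  have h1 : IntegrableOn (fun s : ℝ => Real.exp (-(1/16) * |s|)) (Ioi 0) := by
    apply (exp_neg_integrableOn_Ioi 0 (by norm_num : (0:ℝ) < 1/16)).congr_fun ?_ measurableSet_Ioi
    intro x hx
    simp only []
    rw [abs_of_pos hx]
  have h2 : IntegrableOn (fun s : ℝ => Real.exp (-(1/16) * |s|)) (Iic 0) := by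
    rw [← Measure.map_neg_eq_self (volume : Measure ℝ)]
    have m : MeasurableEmbedding fun x : ℝ => -x := (Homeomorph.neg ℝ).measurableEmbedding
    rw [m.integrableOn_map_iff]
    simp only [Function.comp_def, abs_neg, neg_preimage, neg_Iic, neg_zero]
    exact Iff.mpr integrableOn_Ici_iff_integrableOn_Ioi h1
  have := h2.union h1
  rwa [Iic_union_Ioi, integrableOn_univ] at this

lemma lapG_meas (l : ℝ) : AEStronglyMeasurable (lapG l) volume := by
  unfold lapG
  apply Measurable.aestronglyMeasurable
  apply Measurable.indicator ?_ measurableSet_Ioi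
  fun_prop

lemma lapG_bound {l : ℝ} (hl : 1 ≤ l) (s : ℝ) :
    ‖lapG l s‖ ≤ (16 * Real.exp (1/8)) * Real.exp (-(1/16) * |s|) := by
  have hr1 : (1:ℝ) ≤ Real.sqrt l := by
    rw [show (1:ℝ) = Real.sqrt 1 by simp]
    exact Real.sqrt_le_sqrt hl
  set r := Real.sqrt l with hr
  have hr0 : 0 < r := lt_of_lt_of_le one_pos hr1
  unfold lapG
  rw [← hr]
  by_cases hs : s ∈ Ioi (-r)
  · rw [Set.indicator_of_mem hs]
    set x := s / r with hx
    have hx1 : -1 < x := by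
      rw [hx]; rw [neg_lt, ← neg_div]
      rw [div_lt_one hr0]
      exact neg_lt.mp (by simpa using hs)
    have hv0 : 0 < 1 + x := by linarith
    have hxs : |x| ≤ |s| := by
      rw [hx, abs_div, abs_of_pos hr0]
      exact div_le_self (abs_nonneg s) hr1
    -- key exponent lower bound : E ≥ |s|/8 - 1/8
    have hE : |s| / 8 - 1 / 8 ≤ s ^ 2 * (3 + 2 * x) / (2 * (1 + x) ^ 2) := by
      rcases le_or_gt (|s|) r with hcase | hcase
      · -- |x| ≤ 1
        have hxle : |x| ≤ 1 := by
          rw [hx, abs_div, abs_of_pos hr0, div_le_one hr0]; exact hcase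
        have h1 : (1:ℝ) ≤ 3 + 2 * x := by cases abs_le.mp hxle; linarith
        have h2 : (1 + x) ^ 2 ≤ 4 := by cases abs_le.mp hxle; nlinarith
        have hEge : s ^ 2 / 8 ≤ s ^ 2 * (3 + 2 * x) / (2 * (1 + x) ^ 2) := by
          rw [div_le_div_iff₀ (by norm_num) (by positivity)]
          nlinarith [sq_nonneg s, sq_nonneg (1+x)]
        have : |s| / 8 - 1 / 8 ≤ s ^ 2 / 8 := by nlinarith [sq_abs s, sq_nonneg (|s| - 1)]
        linarith
      · -- s > r, x > 1
        have hspos : 0 < s := by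
          by_contra h
          push_neg at h
          rw [abs_of_nonpos h] at hcase
          have : -r < s := hs
          linarith
        have hseq : |s| = s := abs_of_pos hspos
        have hsr : r < s := by rwa [hseq] at hcase
        have hx1' : 1 < x := by rw [hx, lt_div_iff₀ hr0]; linarith
        have hsx : s = x * r := by rw [hx]; field_simp
        have step1 : s ^ 2 * (2 * x) / (8 * x ^ 2) ≤ s ^ 2 * (3 + 2 * x) / (2 * (1 + x) ^ 2) :=
          div_le_div₀ (by positivity) (by nlinarith) (by positivity) (by nlinarith)
        have step2 : s ^ 2 * (2 * x) / (8 * x ^ 2) = s * r / 4 := by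
          rw [hsx]; field_simp; ring
        have step3 : s / 4 ≤ s * r / 4 := by nlinarith
        rw [hseq]
        rw [step2] at step1
        linarith
    calc ‖(1 + x) * Real.exp (-(s ^ 2 * (3 + 2 * x) / (2 * (1 + x) ^ 2)))‖
        = (1 + x) * Real.exp (-(s ^ 2 * (3 + 2 * x) / (2 * (1 + x) ^ 2))) := by
          rw [Real.norm_eq_abs, abs_of_nonneg (by positivity)]
      _ ≤ (1 + |s|) * Real.exp (-(|s|/8 - 1/8)) := by
          apply mul_le_mul
          · have := (abs_le.mp hxs).2; have := le_abs_self x; linarith [neg_abs_le x]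
          · exact Real.exp_le_exp.mpr (by linarith)
          · positivity
          · positivity
      _ ≤ (16 * Real.exp (|s|/16)) * Real.exp (-(|s|/8 - 1/8)) := by
          apply mul_le_mul_of_nonneg_right ?_ (Real.exp_nonneg _)
          have := Real.add_one_le_exp (|s|/16)
          nlinarith [abs_nonneg s]
      _ = (16 * Real.exp (1/8)) * Real.exp (-(1/16) * |s|) := by
          rw [mul_assoc, ← Real.exp_add, mul_assoc, ← Real.exp_add]
          ring_nf
  · rw [Set.indicator_of_notMem hs]
    simp only [norm_zero]
    positivity

lemma lapG_ptwise (s : ℝ) :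
    Tendsto (fun l => lapG l s) atTop (nhds (Real.exp (-(3/2) * s ^ 2))) := by
  have hsqrt : Tendsto Real.sqrt atTop atTop := by
    have : Real.sqrt = fun x : ℝ => x ^ (1/2 : ℝ) := funext fun x => Real.sqrt_eq_rpow x
    rw [this]
    exact tendsto_rpow_atTop (by norm_num)
  have hx : Tendsto (fun l => s / Real.sqrt l) atTop (nhds 0) :=
    tendsto_const_nhds.div_atTop hsqrt
  have hphi : ContinuousAt (fun x : ℝ => (1 + x) *
      Real.exp (-(s ^ 2 * (3 + 2 * x) / (2 * (1 + x) ^ 2)))) 0 := by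
    apply ContinuousAt.mul (by fun_prop)
    apply Real.continuous_exp.continuousAt.comp
    apply ContinuousAt.neg
    apply ContinuousAt.div (by fun_prop) (by fun_prop)
    norm_num
  have key : Tendsto (fun l => (1 + s / Real.sqrt l) *
      Real.exp (-(s ^ 2 * (3 + 2 * (s / Real.sqrt l)) / (2 * (1 + s / Real.sqrt l) ^ 2))))
      atTop (nhds (Real.exp (-(3/2) * s ^ 2))) := by
    have := hphi.tendsto.comp hx
    simp only [Function.comp_def] at this
    convert this using 2
    · norm_num; ring
  apply key.congr'
  filter_upwards [hsqrt.eventually_gt_atTop |s|] with l hl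
  rw [lapG, Set.indicator_of_mem]
  rw [Set.mem_Ioi]
  calc -Real.sqrt l < -|s| := by linarith
    _ ≤ s := neg_abs_le s

lemma lapG_integral_tendsto :
    Tendsto (fun l => ∫ s, lapG l s) atTop (nhds (Real.sqrt (2 * π / 3))) := by
  have h := tendsto_integral_filter_of_dominated_convergence (μ := volume)
    (F := lapG) (f := fun s => Real.exp (-(3/2) * s ^ 2))
    (fun s => (16 * Real.exp (1/8)) * Real.exp (-(1/16) * |s|))
    (Eventually.of_forall lapG_meas)
    ((eventually_ge_atTop 1).mono fun l hl => Eventually.of_forall (lapG_bound hl))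
    lapBound_integrable
    (Eventually.of_forall fun s => lapG_ptwise s)
  have hint : ∫ s : ℝ, Real.exp (-(3/2) * s ^ 2) = Real.sqrt (2 * π / 3) := by
    rw [integral_gaussian]
    congr 1
    ring
  rwa [hint] at h


lemma rpow_npow {x : ℝ} (hx : 0 ≤ x) (p : ℝ) (n : ℕ) : (x ^ p) ^ n = x ^ (p * n) := by
  rw [← Real.rpow_natCast (x ^ p) n, ← Real.rpow_mul hx]

lemma lap_exp_eq {a b t c l : ℝ} (ha : 0 < a) (hb : 0 < b) (ht : 0 < t)
    (hc : c = (2 * a * t / b) ^ ((1:ℝ)/3)) (hl : l = b * c) :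
    3 * a ^ ((1:ℝ)/3) * b ^ ((2:ℝ)/3) * (2:ℝ) ^ (-(2:ℝ)/3) * t ^ ((1:ℝ)/3) = (3/2) * l := by
  have hX : 0 < 2 * a * t / b := by positivity
  have hc0 : 0 < c := hc ▸ Real.rpow_pos_of_pos hX _
  have hl0 : 0 < l := hl ▸ mul_pos hb hc0
  have hc3 : c ^ 3 = 2 * a * t / b := by
    rw [hc, ← Real.rpow_natCast ((2*a*t/b) ^ ((1:ℝ)/3)) 3, ← Real.rpow_mul hX.le]
    norm_num
  have h1 : (a ^ ((1:ℝ)/3)) ^ (3:ℕ) = a := by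
    rw [rpow_npow ha.le]; norm_num
  have h2 : (b ^ ((2:ℝ)/3)) ^ (3:ℕ) = b ^ 2 := by
    rw [rpow_npow hb.le]; norm_num
  have h3 : (((2:ℝ)) ^ (-(2:ℝ)/3)) ^ (3:ℕ) = 1/4 := by
    rw [rpow_npow (by norm_num : (0:ℝ) ≤ 2)]
    norm_num
  have h4 : (t ^ ((1:ℝ)/3)) ^ (3:ℕ) = t := by
    rw [rpow_npow ht.le]; norm_num
  apply pow_inj3 (by positivity) (by positivity)
  calc (3 * a ^ ((1:ℝ)/3) * b ^ ((2:ℝ)/3) * (2:ℝ) ^ (-(2:ℝ)/3) * t ^ ((1:ℝ)/3)) ^ 3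
      = 27 * ((a ^ ((1:ℝ)/3)) ^ (3:ℕ)) * ((b ^ ((2:ℝ)/3)) ^ (3:ℕ)) *
        (((2:ℝ) ^ (-(2:ℝ)/3)) ^ (3:ℕ)) * ((t ^ ((1:ℝ)/3)) ^ (3:ℕ)) := by ring
    _ = 27 * a * b ^ 2 * (1/4) * t := by rw [h1, h2, h3, h4]
    _ = (3/2 * l) ^ 3 := by
        rw [hl, mul_pow, mul_pow, hc3]
        field_simp
        ring

lemma lap_prefac_eq {a b t c l : ℝ} (ha : 0 < a) (hb : 0 < b) (ht : 0 < t)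
    (hc : c = (2 * a * t / b) ^ ((1:ℝ)/3)) (hl : l = b * c) :
    c ^ 2 / Real.sqrt l = Real.sqrt 2 * a ^ ((1:ℝ)/2) * t ^ ((1:ℝ)/2) / b := by
  have hX : 0 < 2 * a * t / b := by positivity
  have hc0 : 0 < c := hc ▸ Real.rpow_pos_of_pos hX _
  have hl0 : 0 < l := hl ▸ mul_pos hb hc0
  have hc3 : c ^ 3 = 2 * a * t / b := by
    rw [hc, ← Real.rpow_natCast ((2*a*t/b) ^ ((1:ℝ)/3)) 3, ← Real.rpow_mul hX.le]
    norm_num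
  have hr0 : 0 < Real.sqrt l := Real.sqrt_pos.mpr hl0
  have ha2 : (a ^ ((1:ℝ)/2)) ^ (2:ℕ) = a := by rw [rpow_npow ha.le]; norm_num
  have ht2 : (t ^ ((1:ℝ)/2)) ^ (2:ℕ) = t := by rw [rpow_npow ht.le]; norm_num
  apply pow_inj2 (by positivity) (by positivity)
  calc (c ^ 2 / Real.sqrt l) ^ 2 = c ^ 4 / l := by
        rw [div_pow, Real.sq_sqrt hl0.le]; ring_nf
    _ = 2 * a * t / b ^ 2 := by
        rw [hl, show c ^ 4 = c ^ 3 * c by ring, hc3]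
        field_simp
    _ = (Real.sqrt 2 * a ^ ((1:ℝ)/2) * t ^ ((1:ℝ)/2) / b) ^ 2 := by
        rw [div_pow, mul_pow, mul_pow, Real.sq_sqrt (by norm_num : (0:ℝ) ≤ 2), ha2, ht2]


lemma lap_cv {a b t c l : ℝ} (ha : 0 < a) (hb : 0 < b) (ht : 0 < t)
    (hc : c = (2 * a * t / b) ^ ((1:ℝ)/3)) (hl : l = b * c) :
    ∫ u in Set.Ioi (0:ℝ), u * Real.exp (-(a * t) / u ^ 2 - b * u)
      = (c ^ 2 / Real.sqrt l) * Real.exp (-(3/2) * l) * ∫ s, lapG l s := by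
  have hX : 0 < 2 * a * t / b := by positivity
  have hc0 : 0 < c := hc ▸ Real.rpow_pos_of_pos hX _
  have hl0 : 0 < l := hl ▸ mul_pos hb hc0
  set r := Real.sqrt l with hrdef
  have hr0 : 0 < r := Real.sqrt_pos.mpr hl0
  have hr2 : r ^ 2 = l := Real.sq_sqrt hl0.le
  have hc3 : c ^ 3 = 2 * a * t / b := by
    rw [hc, ← Real.rpow_natCast ((2*a*t/b) ^ ((1:ℝ)/3)) 3, ← Real.rpow_mul hX.le]
    norm_num
  have hat : a * t = b * c ^ 3 / 2 := by
    rw [hc3]; field_simp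
  set β := c / r with hβdef
  have hβ0 : 0 < β := div_pos hc0 hr0
  set f : ℝ → ℝ := fun u => u * Real.exp (-(a * t) / u ^ 2 - b * u) with hf
  -- step 1 : scaling
  have step1 : ∫ y in Set.Ioi (0:ℝ), f (β * y) = β⁻¹ * ∫ u in Set.Ioi (0:ℝ), f u := by
    have := integral_comp_mul_left_Ioi f 0 hβ0
    rw [mul_zero] at this
    simpa using this
  -- step 2 : translation
  have step2 : ∫ s in Set.Ioi (-r), f (β * (s + r)) = ∫ y in Set.Ioi (0:ℝ), f (β * y) := by
    rw [← integral_indicator measurableSet_Ioi, ← integral_indicator measurableSet_Ioi]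
    rw [← integral_add_right_eq_self (fun y => Set.indicator (Set.Ioi (0:ℝ)) (fun y => f (β * y)) y) r]
    congr 1
    ext s
    by_cases hs : s ∈ Set.Ioi (-r)
    · rw [Set.indicator_of_mem hs, Set.indicator_of_mem (by simpa [Set.mem_Ioi] using by linarith [Set.mem_Ioi.mp hs] : s + r ∈ Set.Ioi (0:ℝ))]
    · rw [Set.indicator_of_notMem hs, Set.indicator_of_notMem]
      simp only [Set.mem_Ioi] at hs ⊢
      linarith
  -- step 3 : pointwise identity
  have step3 : ∫ s in Set.Ioi (-r), f (β * (s + r))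
      = ∫ s in Set.Ioi (-r), c * Real.exp (-(3/2) * l) * ((1 + s / r) *
          Real.exp (-(s ^ 2 * (3 + 2 * (s / r)) / (2 * (1 + s / r) ^ 2)))) := by
    apply setIntegral_congr_fun measurableSet_Ioi
    intro s hs
    have hsr : -r < s := Set.mem_Ioi.mp hs
    set x := s / r with hx
    have hv0 : 0 < 1 + x := by
      rw [hx]
      have : -1 < s / r := by rw [neg_lt, ← neg_div, div_lt_one hr0]; linarith
      linarith
    have hβsr : β * (s + r) = c * (1 + x) := by
      rw [hβdef, hx]
      field_simp
      exact add_comm s r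
    have hs2 : s ^ 2 = x ^ 2 * l := by
      rw [hx, div_pow]; rw [← hr2]; field_simp
    simp only [hf, hβsr]
    have hexp : -(a * t) / (c * (1 + x)) ^ 2 - b * (c * (1 + x))
        = -(3/2) * l + -(s ^ 2 * (3 + 2 * x) / (2 * (1 + x) ^ 2)) := by
      rw [hat, hs2, hl]
      field_simp
      ring
    rw [hexp, Real.exp_add]
    ring
  -- assemble
  have hG : ∫ s, lapG l s = ∫ s in Set.Ioi (-r), (1 + s / r) *
      Real.exp (-(s ^ 2 * (3 + 2 * (s / r)) / (2 * (1 + s / r) ^ 2))) := by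
    unfold lapG
    rw [← hrdef]
    exact integral_indicator measurableSet_Ioi
  have hI : ∫ u in Set.Ioi (0:ℝ), f u = β * ∫ s in Set.Ioi (-r), f (β * (s + r)) := by
    rw [step2, step1, ← mul_assoc, mul_inv_cancel₀ hβ0.ne', one_mul]
  show ∫ u in Set.Ioi (0:ℝ), f u = _
  rw [hI, step3, hG, MeasureTheory.integral_const_mul, hβdef]
  ring

/-- For `a, b > 0`, as `t → ∞`,
`∫₀^∞ u exp(-at/u² - bu) du ~ 2√(π/3)·a^{1/2}·b⁻¹·t^{1/2}·exp(-3a^{1/3}b^{2/3}2^{-2/3}t^{1/3})`. -/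
theorem laplace_asymptotic_exp_integral_linear (a b : ℝ) (ha : 0 < a) (hb : 0 < b) :
    Tendsto (fun t : ℝ =>
        (∫ u in Set.Ioi (0:ℝ), u * Real.exp (-(a * t) / u ^ 2 - b * u)) /
          (2 * Real.sqrt (π / 3) * a ^ ((1:ℝ)/2) * b⁻¹ * t ^ ((1:ℝ)/2) *
            Real.exp (-3 * a ^ ((1:ℝ)/3) * b ^ ((2:ℝ)/3) * (2:ℝ) ^ (-(2:ℝ)/3) * t ^ ((1:ℝ)/3))))
      atTop (nhds 1) := by
  have hpi : 0 < π := Real.pi_pos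
  have hK : 0 < Real.sqrt (2 * π / 3) := Real.sqrt_pos.mpr (by positivity)
  -- composed tendsto
  have hlam : Tendsto (fun t : ℝ => b * (2 * a * t / b) ^ ((1:ℝ)/3)) atTop atTop := by
    apply Tendsto.const_mul_atTop hb
    apply (tendsto_rpow_atTop (by norm_num : (0:ℝ) < 1/3)).comp
    apply Tendsto.atTop_div_const hb
    exact Tendsto.const_mul_atTop (by positivity) tendsto_id
  have hmain : Tendsto (fun t : ℝ =>
      (∫ s, lapG (b * (2 * a * t / b) ^ ((1:ℝ)/3)) s) / Real.sqrt (2 * π / 3))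
      atTop (nhds 1) := by
    have := (lapG_integral_tendsto.comp hlam).div_const (Real.sqrt (2 * π / 3))
    rwa [div_self hK.ne'] at this
  apply hmain.congr'
  filter_upwards [eventually_gt_atTop (0:ℝ)] with t ht
  set c : ℝ := (2 * a * t / b) ^ ((1:ℝ)/3) with hc
  set l : ℝ := b * c with hl
  have hX : 0 < 2 * a * t / b := by positivity
  have hc0 : 0 < c := Real.rpow_pos_of_pos hX _
  have hl0 : 0 < l := mul_pos hb hc0
  have hcv := lap_cv ha hb ht hc hl
  have hexp := lap_exp_eq ha hb ht hc hl
  have hpre := lap_prefac_eq ha hb ht hc hl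
  have hsplit : Real.sqrt (2 * π / 3) = Real.sqrt 2 * Real.sqrt (π / 3) := by
    rw [show (2 * π / 3 : ℝ) = 2 * (π / 3) by ring, Real.sqrt_mul (by norm_num)]
  have hEarg : -3 * a ^ ((1:ℝ)/3) * b ^ ((2:ℝ)/3) * (2:ℝ) ^ (-(2:ℝ)/3) * t ^ ((1:ℝ)/3)
      = -(3/2) * l := by
    have := hexp; linarith
  rw [eq_comm]
  rw [hcv, hEarg, hpre, hsplit]
  have hE : (0:ℝ) < Real.exp (-(3/2) * l) := Real.exp_pos _
  have ha2 : (0:ℝ) < a ^ ((1:ℝ)/2) := Real.rpow_pos_of_pos ha _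
  have ht2 : (0:ℝ) < t ^ ((1:ℝ)/2) := Real.rpow_pos_of_pos ht _
  have hs3 : (0:ℝ) < Real.sqrt (π/3) := Real.sqrt_pos.mpr (by positivity)
  have h2 : (0:ℝ) < Real.sqrt 2 := Real.sqrt_pos.mpr (by norm_num)
  have h22 : Real.sqrt 2 * Real.sqrt 2 = 2 := Real.mul_self_sqrt (by norm_num)
  field_simp
  linear_combination (∫ (s : ℝ), lapG l s) * h22
end

section
/- Let h, f : ℝ → ℝ be continuous with f ≤ 0, f attaining a strict global maximum at x₀ > 0 with f twice differentiable at x₀, f'(x₀) = 0, f''(x₀) < 0, h(x₀) ≠ 0, and ∫₀^∞ h(x) e^{λ f(x)} dx < ∞ for all λ > 0 (plus standard localization hypotheses). Then as λ → ∞, ∫₀^∞ h(x) e^{λ f(x)} dx ~ h(x₀) e^{λ f(x₀)} √(2π/(λ|f''(x₀)|)). -/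
open MeasureTheory Real Filter Set

lemma sqrtl_mul (l m p : ℝ) (hl : 0 < l) (hm : m ≠ 0) :
    Real.sqrt l * Real.sqrt (p / (l * m)) = Real.sqrt (p / m) := by
  rw [← Real.sqrt_mul hl.le]
  congr 1
  field_simp

lemma gauss_integrable (a x₀ : ℝ) (ha : 0 < a) :
    Integrable (fun x : ℝ => rexp (-a * (x - x₀)^2)) :=
  (integrable_exp_neg_mul_sq ha).comp_sub_right x₀

lemma gauss_total (a x₀ : ℝ) : ∫ x : ℝ, rexp (-a * (x - x₀)^2) = Real.sqrt (π / a) := by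
  rw [integral_sub_right_eq_self (fun u => rexp (-a * u^2)) x₀, integral_gaussian]

lemma gauss_upper (a x₀ : ℝ) (ha : 0 < a) (s : Set ℝ) :
    ∫ x in s, rexp (-a * (x - x₀)^2) ≤ Real.sqrt (π / a) := by
  rw [← gauss_total a x₀]
  exact setIntegral_le_integral (gauss_integrable a x₀ ha)
    (Eventually.of_forall fun x => (Real.exp_pos _).le)

lemma gauss_lower (a x₀ δ : ℝ) (ha : 0 < a) (hδ : 0 ≤ δ) :
    Real.sqrt (π / a) - ∫ x in Icc (x₀ - δ) (x₀ + δ), rexp (-a * (x - x₀)^2) ≤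
      rexp (-(a * δ^2) / 2) * Real.sqrt (2 * π / a) := by
  have hint := gauss_integrable a x₀ ha
  have hsplit := integral_add_compl (measurableSet_Icc (a := x₀ - δ) (b := x₀ + δ)) hint
  rw [gauss_total] at hsplit
  have hcompl : ∫ x in (Icc (x₀ - δ) (x₀ + δ))ᶜ, rexp (-a * (x - x₀)^2) ≤
      rexp (-(a * δ^2) / 2) * Real.sqrt (2 * π / a) := by
    have hint2 := gauss_integrable (a/2) x₀ (by linarith)
    have hmono : ∫ x in (Icc (x₀ - δ) (x₀ + δ))ᶜ, rexp (-a * (x - x₀)^2) ≤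
        ∫ x in (Icc (x₀ - δ) (x₀ + δ))ᶜ, rexp (-(a * δ^2) / 2) * rexp (-(a/2) * (x - x₀)^2) := by
      apply setIntegral_mono_on (hint.integrableOn) ((hint2.const_mul _).integrableOn)
        (measurableSet_Icc.compl)
      intro x hx
      rw [← Real.exp_add]
      apply Real.exp_le_exp.mpr
      have hxd : δ^2 ≤ (x - x₀)^2 := by
        simp only [mem_compl_iff, mem_Icc, not_and_or, not_le] at hx
        rcases hx with hx | hx
        · nlinarith
        · nlinarith
      nlinarith
    calc _ ≤ _ := hmono
      _ = rexp (-(a * δ^2) / 2) * ∫ x in (Icc (x₀ - δ) (x₀ + δ))ᶜ, rexp (-(a/2) * (x - x₀)^2) := by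
          rw [integral_const_mul]
      _ ≤ rexp (-(a * δ^2) / 2) * Real.sqrt (π / (a/2)) := by
          apply mul_le_mul_of_nonneg_left ?_ (Real.exp_pos _).le
          exact setIntegral_le_integral hint2 (Eventually.of_forall fun x => (Real.exp_pos _).le) |>.trans
            (le_of_eq (gauss_total _ _))
      _ = rexp (-(a * δ^2) / 2) * Real.sqrt (2 * π / a) := by
          congr 1
          rw [div_div_eq_mul_div, mul_comm π 2]
  linarith

set_option maxHeartbeats 2000000 in
lemma laplace_main (h f : ℝ → ℝ) (x₀ c : ℝ)
    (hh : Continuous h) (hf : Continuous f)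
    (hx₀ : 0 < x₀) (hc : 0 < c)
    (htay : ∀ ε > (0:ℝ), ∃ δ > (0:ℝ), ∀ x, |x - x₀| ≤ δ →
      |f x - f x₀ - (-c)/2 * (x - x₀)^2| ≤ ε * (x - x₀)^2)
    (hint : ∀ l : ℝ, 0 < l →
      IntegrableOn (fun x => h x * Real.exp (l * f x)) (Set.Ioi 0))
    (hloc : ∀ δ > (0:ℝ), ∃ ε > (0:ℝ), ∀ x, 0 ≤ x → δ ≤ |x - x₀| → f x ≤ f x₀ - ε) :
    Tendsto (fun l : ℝ => Real.sqrt l * ∫ x in Set.Ioi (0:ℝ), h x * rexp (l * (f x - f x₀)))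
      atTop (nhds (h x₀ * Real.sqrt (2 * π / c))) := by
  -- notation
  set g : ℝ → ℝ := fun x => f x - f x₀ with hg
  have hgcont : Continuous g := hf.sub continuous_const
  -- integrability of the g-integrand
  have hwint : ∀ l : ℝ, 0 < l →
      IntegrableOn (fun x => h x * rexp (l * g x)) (Set.Ioi 0) := by
    intro l hl
    have h2 : IntegrableOn (fun x => rexp (-(l * f x₀)) * (h x * rexp (l * f x))) (Set.Ioi 0) :=
      ((hint l hl).const_mul (rexp (-(l * f x₀))))
    apply IntegrableOn.congr_fun h2 ?_ measurableSet_Ioi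
    intro x _
    show rexp (-(l * f x₀)) * (h x * rexp (l * f x)) = h x * rexp (l * (f x - f x₀))
    rw [show rexp (-(l * f x₀)) * (h x * rexp (l * f x))
        = h x * (rexp (-(l * f x₀)) * rexp (l * f x)) by ring, ← Real.exp_add]
    congr 1
    ring
  -- K
  set K : ℝ := ∫ x in Set.Ioi (0:ℝ), |h x| * rexp (g x) with hK
  have hKint : IntegrableOn (fun x => |h x| * rexp (g x)) (Set.Ioi 0) := by
    have h2 : IntegrableOn (fun x => |h x * rexp (1 * g x)|) (Set.Ioi 0) := (hwint 1 one_pos).abs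
    apply IntegrableOn.congr_fun h2 ?_ measurableSet_Ioi
    intro x _
    simp [abs_mul, Real.abs_exp]
  have hKnonneg : 0 ≤ K := by
    apply setIntegral_nonneg measurableSet_Ioi
    intro x _
    positivity

  -- change goal to g-form
  have hrw : (fun l : ℝ => Real.sqrt l * ∫ x in Set.Ioi (0:ℝ), h x * rexp (l * (f x - f x₀)))
      = (fun l : ℝ => Real.sqrt l * ∫ x in Set.Ioi (0:ℝ), h x * rexp (l * g x)) := rfl
  rw [hrw]
  rw [Metric.tendsto_nhds]
  intro ε hε
  -- sq and continuity parameter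
  set sq : ℝ := Real.sqrt (2 * π / c) with hsqdef
  have hsqeq : sq = Real.sqrt (π / (c * 1 / 2)) := by
    rw [hsqdef]; congr 1; field_simp
  have hsqpos : 0 < sq := Real.sqrt_pos.mpr (by positivity)
  set u : ℝ → ℝ := fun t => |h x₀| * Real.sqrt (π / (c * t / 2)) with hudef
  have hucont : ContinuousAt u 1 := by
    apply ContinuousAt.mul continuousAt_const
    apply Real.continuous_sqrt.continuousAt.comp
    apply ContinuousAt.div continuousAt_const
    · fun_prop
    · simp [hc.ne']
  rw [Metric.continuousAt_iff] at hucont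
  obtain ⟨η₀, hη₀pos, hη₀⟩ := hucont (ε/4) (by positivity)
  set η : ℝ := min (1/2) (η₀/2) with hηdef
  have hηpos : 0 < η := lt_min (by norm_num) (by positivity)
  have hηle : η ≤ 1/2 := min_le_left _ _
  have hη1 : 0 < 1 - η := by linarith
  have hD₁ : u (1 - η) - u 1 < ε/4 := by
    have : dist (1 - η) 1 < η₀ := by
      rw [Real.dist_eq]
      rw [abs_of_nonpos (by linarith)]
      have := min_le_right (1/2 : ℝ) (η₀/2); linarith
    have := hη₀ this
    rw [Real.dist_eq] at this
    calc u (1-η) - u 1 ≤ |u (1-η) - u 1| := le_abs_self _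
      _ < ε/4 := this
  have hD₂ : u 1 - u (1 + η) < ε/4 := by
    have : dist (1 + η) 1 < η₀ := by
      rw [Real.dist_eq]
      rw [abs_of_nonneg (by linarith)]
      have := min_le_right (1/2 : ℝ) (η₀/2); linarith
    have := hη₀ this
    rw [Real.dist_eq, abs_sub_comm] at this
    calc u 1 - u (1+η) ≤ |u 1 - u (1+η)| := le_abs_self _
      _ < ε/4 := this
  -- the two gaussian rates
  set m₁ : ℝ := c * (1 - η) / 2 with hm₁
  set m₂ : ℝ := c * (1 + η) / 2 with hm₂
  have hm₁pos : 0 < m₁ := by rw [hm₁]; positivity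
  have hm₂pos : 0 < m₂ := by rw [hm₂]; positivity
  set B : ℝ := Real.sqrt (π / (c * (1 - η) / 2)) with hBdef
  have hBpos : 0 < B := Real.sqrt_pos.mpr (by positivity)
  -- oscillation parameter for h
  set η' : ℝ := min η (ε / (8 * (B + 1))) with hη'def
  have hη'pos : 0 < η' := lt_min hηpos (by positivity)
  have hη'B : η' * B ≤ ε/8 := by
    have h1 : η' ≤ ε / (8 * (B + 1)) := min_le_right _ _
    have h2 : η' * B ≤ (ε / (8 * (B + 1))) * B :=
      mul_le_mul_of_nonneg_right h1 hBpos.le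
    calc η' * B ≤ (ε / (8 * (B + 1))) * B := h2
      _ ≤ ε/8 := by
          rw [div_mul_eq_mul_div, div_le_div_iff₀ (by positivity) (by norm_num)]
          nlinarith
  -- Taylor δ₁
  obtain ⟨δ₁, hδ₁pos, hδ₁⟩ := htay (c * η / 2) (by positivity)
  -- continuity of h δ₂
  have hhc := hh.continuousAt (x := x₀)
  rw [Metric.continuousAt_iff] at hhc
  obtain ⟨δ₂, hδ₂pos, hδ₂⟩ := hhc η' hη'pos
  set δ : ℝ := min δ₁ (min (δ₂/2) (x₀/2)) with hδdef
  have hδpos : 0 < δ := lt_min hδ₁pos (lt_min (by positivity) (by positivity))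
  have hδδ₁ : δ ≤ δ₁ := min_le_left _ _
  have hδδ₂ : δ ≤ δ₂/2 := le_trans (min_le_right _ _) (min_le_left _ _)
  have hδx₀ : δ ≤ x₀/2 := le_trans (min_le_right _ _) (min_le_right _ _)
  obtain ⟨ε₀, hε₀pos, hε₀⟩ := hloc δ hδpos
  set I : Set ℝ := Icc (x₀ - δ) (x₀ + δ) with hIdef
  have hsubI : I ⊆ Ioi 0 := by
    intro x hx
    have := hx.1
    simp only [mem_Ioi]
    linarith
  -- bounds on I
  have hgub : ∀ x ∈ I, g x ≤ -m₁ * (x - x₀)^2 := by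
    intro x hx
    have hxd : |x - x₀| ≤ δ₁ := by
      rw [abs_le]; exact ⟨by linarith [hx.1], by linarith [hx.2]⟩
    have := hδ₁ x hxd
    rw [abs_le] at this
    simp only [hg, hm₁]
    linarith [this.2]
  have hglb : ∀ x ∈ I, -m₂ * (x - x₀)^2 ≤ g x := by
    intro x hx
    have hxd : |x - x₀| ≤ δ₁ := by
      rw [abs_le]; exact ⟨by linarith [hx.1], by linarith [hx.2]⟩
    have := hδ₁ x hxd
    rw [abs_le] at this
    simp only [hg, hm₂]
    linarith [this.1]
  have hhosc : ∀ x ∈ I, |h x - h x₀| ≤ η' := by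
    intro x hx
    have habs : |x - x₀| ≤ δ := by
      rw [abs_le]; exact ⟨by linarith [hx.1], by linarith [hx.2]⟩
    have hd : dist x x₀ < δ₂ := by
      rw [Real.dist_eq]; linarith
    have := hδ₂ hd
    rw [Real.dist_eq] at this
    exact this.le

  -- eventual smallness facts
  have hev2 : ∀ᶠ l : ℝ in atTop,
      |h x₀| * (rexp (-(l * m₂ * δ^2) / 2) * Real.sqrt (2 * π / m₂)) < ε/8 := by
    have h1 : Tendsto (fun l : ℝ => -(l * m₂ * δ^2) / 2) atTop atBot := by
      have h0 : Tendsto (fun l : ℝ => l * (-(m₂ * δ^2) / 2)) atTop atBot :=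
        Tendsto.atTop_mul_const_of_neg (by
          have hp := mul_pos hm₂pos (pow_pos hδpos 2)
          linarith) tendsto_id
      apply h0.congr
      intro l; ring
    have htend := ((Real.tendsto_exp_atBot.comp h1).mul_const
      (Real.sqrt (2 * π / m₂))).const_mul (|h x₀|)
    simp only [zero_mul, mul_zero] at htend
    have := (Metric.tendsto_nhds.mp htend) (ε/8) (by positivity)
    filter_upwards [this] with l hl
    rw [Real.dist_eq, sub_zero] at hl
    exact lt_of_le_of_lt (le_abs_self _) hl
  have hev3 : ∀ᶠ l : ℝ in atTop, l * rexp (-((l - 1) * ε₀)) * K < ε/8 := by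
    have h0 := tendsto_pow_mul_exp_neg_atTop_nhds_zero 1
    have h1 : Tendsto (fun l : ℝ => l * ε₀) atTop atTop :=
      Tendsto.atTop_mul_const hε₀pos tendsto_id
    have h2 := (h0.comp h1).mul_const (rexp ε₀ * K / ε₀)
    simp only [zero_mul] at h2
    have htend : Tendsto (fun l : ℝ => l * rexp (-((l - 1) * ε₀)) * K) atTop (nhds 0) := by
      apply h2.congr
      intro l
      show (l * ε₀) ^ 1 * rexp (-(l * ε₀)) * (rexp ε₀ * K / ε₀) = l * rexp (-((l - 1) * ε₀)) * K
      rw [show -((l - 1) * ε₀) = ε₀ + -(l * ε₀) by ring, Real.exp_add]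
      field_simp
    have := (Metric.tendsto_nhds.mp htend) (ε/8) (by positivity)
    filter_upwards [this] with l hl
    rw [Real.dist_eq, sub_zero] at hl
    exact lt_of_le_of_lt (le_abs_self _) hl
  -- main body
  filter_upwards [eventually_ge_atTop (1:ℝ), hev2, hev3] with l hl1 hev2l hev3l
  have hl0 : (0:ℝ) < l := lt_of_lt_of_le one_pos hl1
  have hsl : (0:ℝ) ≤ Real.sqrt l := Real.sqrt_nonneg l
  have hslle : Real.sqrt l ≤ l :=
    (Real.sqrt_le_sqrt (by nlinarith only [hl1])).trans (le_of_eq (Real.sqrt_mul_self hl0.le))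
  have hmeasI : MeasurableSet I := hIdef ▸ measurableSet_Icc
  have hmeasT : MeasurableSet (Ioi (0:ℝ) \ I) := measurableSet_Ioi.diff hmeasI
  have conte : Continuous fun x => rexp (l * g x) :=
    Real.continuous_exp.comp (continuous_const.mul hgcont)
  have contw : Continuous fun x => h x * rexp (l * g x) := hh.mul conte
  have contw2 : Continuous fun x => (h x - h x₀) * rexp (l * g x) :=
    (hh.sub continuous_const).mul conte
  have intI : IntegrableOn (fun x => h x * rexp (l * g x)) I := by
    rw [hIdef]; exact contw.integrableOn_Icc
  have intI2 : IntegrableOn (fun x => (h x - h x₀) * rexp (l * g x)) I := by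
    rw [hIdef]; exact contw2.integrableOn_Icc
  have intIe : IntegrableOn (fun x => rexp (l * g x)) I := by
    rw [hIdef]; exact conte.integrableOn_Icc
  have inttail : IntegrableOn (fun x => h x * rexp (l * g x)) (Ioi 0 \ I) :=
    (hwint l hl0).mono_set diff_subset
  have ha₁ : 0 < l * m₁ := by positivity
  have ha₂ : 0 < l * m₂ := by positivity
  have gint₁ : IntegrableOn (fun x => rexp (-(l * m₁) * (x - x₀)^2)) I :=
    (gauss_integrable _ x₀ ha₁).integrableOn
  have gint₂ : IntegrableOn (fun x => rexp (-(l * m₂) * (x - x₀)^2)) I :=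
    (gauss_integrable _ x₀ ha₂).integrableOn
  have hsplit : ∫ x in Ioi 0, h x * rexp (l * g x)
      = (∫ x in I, h x * rexp (l * g x)) + ∫ x in Ioi 0 \ I, h x * rexp (l * g x) := by
    rw [← setIntegral_union disjoint_sdiff_right hmeasT intI inttail, union_diff_cancel hsubI]
  have key : Real.sqrt l * ∫ x in Ioi 0, h x * rexp (l * g x)
      = (Real.sqrt l * ∫ x in I, (h x - h x₀) * rexp (l * g x))
        + h x₀ * (Real.sqrt l * ∫ x in I, rexp (l * g x))
        + Real.sqrt l * ∫ x in Ioi 0 \ I, h x * rexp (l * g x) := by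
    rw [hsplit]
    have hdecomp : ∫ x in I, h x * rexp (l * g x)
        = (∫ x in I, (h x - h x₀) * rexp (l * g x)) + h x₀ * ∫ x in I, rexp (l * g x) := by
      rw [← integral_const_mul, ← integral_add intI2 (intIe.const_mul (h x₀))]
      apply integral_congr_ae (Eventually.of_forall fun x => by ring)
    rw [hdecomp]; ring
  rw [Real.dist_eq, key]
  set X := Real.sqrt l * ∫ x in I, (h x - h x₀) * rexp (l * g x) with hXdef
  set J := Real.sqrt l * ∫ x in I, rexp (l * g x) with hJdef
  set Y := Real.sqrt l * ∫ x in Ioi 0 \ I, h x * rexp (l * g x) with hYdef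
  -- pointwise gaussian bounds on I
  have hexpub : ∀ x ∈ I, rexp (l * g x) ≤ rexp (-(l * m₁) * (x - x₀)^2) := by
    intro x hx
    apply Real.exp_le_exp.mpr
    have := mul_le_mul_of_nonneg_left (hgub x hx) hl0.le
    calc l * g x ≤ l * (-m₁ * (x - x₀)^2) := this
      _ = -(l * m₁) * (x - x₀)^2 := by ring
  have hexplb : ∀ x ∈ I, rexp (-(l * m₂) * (x - x₀)^2) ≤ rexp (l * g x) := by
    intro x hx
    apply Real.exp_le_exp.mpr
    have := mul_le_mul_of_nonneg_left (hglb x hx) hl0.le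
    calc -(l * m₂) * (x - x₀)^2 = l * (-m₂ * (x - x₀)^2) := by ring
      _ ≤ l * g x := this
  -- Bound on X
  have hXbound : |X| ≤ ε/8 := by
    have intI2' : IntegrableOn (fun x => |h x - h x₀| * rexp (l * g x)) I := by
      rw [hIdef]; exact (((hh.sub continuous_const).abs).mul conte).integrableOn_Icc
    have gint₁' : IntegrableOn (fun x => η' * rexp (-(l * m₁) * (x - x₀)^2)) I :=
      gint₁.const_mul _
    have h1 : |∫ x in I, (h x - h x₀) * rexp (l * g x)|
        ≤ ∫ x in I, η' * rexp (-(l * m₁) * (x - x₀)^2) := by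
      calc |∫ x in I, (h x - h x₀) * rexp (l * g x)|
          ≤ ∫ x in I, |h x - h x₀| * rexp (l * g x) := by
            simpa [Real.norm_eq_abs, abs_mul, Real.abs_exp] using
              norm_integral_le_integral_norm (μ := volume.restrict I)
                (fun x => (h x - h x₀) * rexp (l * g x))
        _ ≤ ∫ x in I, η' * rexp (-(l * m₁) * (x - x₀)^2) := by
            apply setIntegral_mono_on intI2' gint₁' hmeasI
            intro x hx
            exact mul_le_mul (hhosc x hx) (hexpub x hx) (Real.exp_pos _).le hη'pos.le
    have h2 : ∫ x in I, η' * rexp (-(l * m₁) * (x - x₀)^2)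
        ≤ η' * Real.sqrt (π / (l * m₁)) := by
      rw [integral_const_mul]
      exact mul_le_mul_of_nonneg_left (gauss_upper _ x₀ ha₁ I) hη'pos.le
    have h3 : |X| ≤ Real.sqrt l * (η' * Real.sqrt (π / (l * m₁))) := by
      rw [hXdef, abs_mul, abs_of_nonneg hsl]
      exact mul_le_mul_of_nonneg_left (h1.trans h2) hsl
    have h4 : Real.sqrt l * (η' * Real.sqrt (π / (l * m₁))) = η' * Real.sqrt (π / m₁) := by
      rw [show Real.sqrt l * (η' * Real.sqrt (π / (l * m₁)))
          = η' * (Real.sqrt l * Real.sqrt (π / (l * m₁))) by ring,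
        sqrtl_mul _ _ _ hl0 hm₁pos.ne']
    have h5 : Real.sqrt (π / m₁) = B := by rw [hBdef, hm₁]
    calc |X| ≤ η' * Real.sqrt (π / m₁) := h4 ▸ h3
      _ = η' * B := by rw [h5]
      _ ≤ ε/8 := hη'B
  -- Bounds on J
  have hJub : J ≤ Real.sqrt (π / m₁) := by
    have h1 : ∫ x in I, rexp (l * g x) ≤ ∫ x in I, rexp (-(l * m₁) * (x - x₀)^2) :=
      setIntegral_mono_on intIe gint₁ hmeasI hexpub
    have h2 := (h1.trans (gauss_upper _ x₀ ha₁ I))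
    calc J ≤ Real.sqrt l * Real.sqrt (π / (l * m₁)) := by
          rw [hJdef]; exact mul_le_mul_of_nonneg_left h2 hsl
      _ = Real.sqrt (π / m₁) := sqrtl_mul _ _ _ hl0 hm₁pos.ne'
  have hJlb : Real.sqrt (π / m₂)
      - rexp (-(l * m₂ * δ^2) / 2) * Real.sqrt (2 * π / m₂) ≤ J := by
    have h1 : ∫ x in I, rexp (-(l * m₂) * (x - x₀)^2) ≤ ∫ x in I, rexp (l * g x) :=
      setIntegral_mono_on gint₂ intIe hmeasI hexplb
    have h2 : Real.sqrt (π / (l * m₂))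
        - rexp (-((l * m₂) * δ^2) / 2) * Real.sqrt (2 * π / (l * m₂))
        ≤ ∫ x in I, rexp (-(l * m₂) * (x - x₀)^2) := by
      rw [hIdef]
      linarith only [gauss_lower (l * m₂) x₀ δ ha₂ hδpos.le]
    have h3 : Real.sqrt l * (Real.sqrt (π / (l * m₂))
        - rexp (-((l * m₂) * δ^2) / 2) * Real.sqrt (2 * π / (l * m₂))) ≤ J := by
      rw [hJdef]
      exact mul_le_mul_of_nonneg_left (h2.trans h1) hsl
    have h4 : Real.sqrt l * (Real.sqrt (π / (l * m₂))
        - rexp (-((l * m₂) * δ^2) / 2) * Real.sqrt (2 * π / (l * m₂)))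
        = Real.sqrt (π / m₂) - rexp (-(l * m₂ * δ^2) / 2) * Real.sqrt (2 * π / m₂) := by
      rw [mul_sub, sqrtl_mul _ _ _ hl0 hm₂pos.ne',
        show Real.sqrt l * (rexp (-((l * m₂) * δ^2) / 2) * Real.sqrt (2 * π / (l * m₂)))
          = rexp (-((l * m₂) * δ^2) / 2) * (Real.sqrt l * Real.sqrt (2 * π / (l * m₂))) by ring,
        sqrtl_mul _ _ _ hl0 hm₂pos.ne']
    exact le_of_le_of_eq (le_of_eq h4.symm) rfl |>.trans h3
  -- connect with u
  have hu1 : u 1 = |h x₀| * sq := by rw [hudef, hsqeq]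
  have huη₁ : u (1 - η) = |h x₀| * Real.sqrt (π / m₁) := by rw [hudef, hm₁]
  have huη₂ : u (1 + η) = |h x₀| * Real.sqrt (π / m₂) := by rw [hudef, hm₂]
  have hsqP : sq ≤ Real.sqrt (π / m₁) := by
    rw [hsqeq]
    apply Real.sqrt_le_sqrt
    rw [hm₁]
    gcongr
    all_goals linarith only [hηpos]
  have hQsq : Real.sqrt (π / m₂) ≤ sq := by
    rw [hsqeq]
    apply Real.sqrt_le_sqrt
    rw [hm₂]
    gcongr
    all_goals linarith only [hηpos]
  have hEnn : 0 ≤ rexp (-(l * m₂ * δ^2) / 2) * Real.sqrt (2 * π / m₂) := by positivity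
  have habsJ : |h x₀| * |J - sq|
      ≤ (u (1 - η) - u 1) + (u 1 - u (1 + η))
        + |h x₀| * (rexp (-(l * m₂ * δ^2) / 2) * Real.sqrt (2 * π / m₂)) := by
    have hJabs : |J - sq| ≤ (Real.sqrt (π / m₁) - sq) + (sq - Real.sqrt (π / m₂))
        + rexp (-(l * m₂ * δ^2) / 2) * Real.sqrt (2 * π / m₂) := by
      rw [abs_le]
      constructor
      · linarith only [hJub, hJlb, hsqP, hQsq, hEnn]
      · linarith only [hJub, hJlb, hsqP, hQsq, hEnn]
    have := mul_le_mul_of_nonneg_left hJabs (abs_nonneg (h x₀))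
    rw [huη₁, huη₂, hu1]
    nlinarith only [this, abs_nonneg (h x₀)]
  -- Bound on Y
  have hYbound : |Y| ≤ l * rexp (-((l - 1) * ε₀)) * K := by
    have hptw : ∀ x ∈ Ioi 0 \ I, |h x| * rexp (l * g x)
        ≤ rexp (-((l - 1) * ε₀)) * (|h x| * rexp (g x)) := by
      intro x hx
      obtain ⟨hx1, hx2⟩ := hx
      have hdist : δ ≤ |x - x₀| := by
        rw [hIdef, mem_Icc, not_and_or, not_le, not_le] at hx2
        rw [le_abs]
        rcases hx2 with hx2 | hx2
        · right; linarith only [hx2]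
        · left; linarith only [hx2]
      have hgx : g x ≤ -ε₀ := by
        have h9 := hε₀ x (le_of_lt hx1) hdist
        simp only [hg]
        linarith only [h9]
      have hexp : rexp (l * g x) ≤ rexp (-((l - 1) * ε₀)) * rexp (g x) := by
        rw [← Real.exp_add]
        apply Real.exp_le_exp.mpr
        nlinarith only [mul_le_mul_of_nonneg_left hgx (by linarith only [hl1] : (0:ℝ) ≤ l - 1)]
      calc |h x| * rexp (l * g x) ≤ |h x| * (rexp (-((l - 1) * ε₀)) * rexp (g x)) :=
            mul_le_mul_of_nonneg_left hexp (abs_nonneg _)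
        _ = rexp (-((l - 1) * ε₀)) * (|h x| * rexp (g x)) := by ring
    have habs0 : IntegrableOn (fun x => |h x * rexp (l * g x)|) (Ioi 0) :=
      (hwint l hl0).abs
    have inttail_abs : IntegrableOn (fun x => |h x| * rexp (l * g x)) (Ioi 0 \ I) := by
      apply IntegrableOn.congr_fun (habs0.mono_set diff_subset) ?_ hmeasT
      intro x _
      simp [abs_mul, Real.abs_exp]
    have intK' : IntegrableOn (fun x => rexp (-((l - 1) * ε₀)) * (|h x| * rexp (g x)))
        (Ioi 0) := hKint.const_mul _
    have h1 : |∫ x in Ioi 0 \ I, h x * rexp (l * g x)|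
        ≤ ∫ x in Ioi 0 \ I, |h x| * rexp (l * g x) := by
      simpa [Real.norm_eq_abs, abs_mul, Real.abs_exp] using
        norm_integral_le_integral_norm (μ := volume.restrict (Ioi 0 \ I))
          (fun x => h x * rexp (l * g x))
    have h2 : ∫ x in Ioi 0 \ I, |h x| * rexp (l * g x)
        ≤ rexp (-((l - 1) * ε₀)) * K := by
      calc ∫ x in Ioi 0 \ I, |h x| * rexp (l * g x)
          ≤ ∫ x in Ioi 0 \ I, rexp (-((l - 1) * ε₀)) * (|h x| * rexp (g x)) :=
            setIntegral_mono_on inttail_abs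
              (intK'.mono_set diff_subset) hmeasT hptw
        _ = rexp (-((l - 1) * ε₀)) * ∫ x in Ioi 0 \ I, |h x| * rexp (g x) := by
            rw [integral_const_mul]
        _ ≤ rexp (-((l - 1) * ε₀)) * K := by
            apply mul_le_mul_of_nonneg_left ?_ (Real.exp_pos _).le
            rw [hK]
            apply setIntegral_mono_set hKint
              (Eventually.of_forall fun x => by positivity)
              (HasSubset.Subset.eventuallyLE diff_subset)
    calc |Y| = Real.sqrt l * |∫ x in Ioi 0 \ I, h x * rexp (l * g x)| := by
          rw [hYdef, abs_mul, abs_of_nonneg hsl]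
      _ ≤ Real.sqrt l * (rexp (-((l - 1) * ε₀)) * K) :=
          mul_le_mul_of_nonneg_left (h1.trans h2) hsl
      _ ≤ l * (rexp (-((l - 1) * ε₀)) * K) :=
          mul_le_mul_of_nonneg_right hslle (by positivity)
      _ = l * rexp (-((l - 1) * ε₀)) * K := by ring
  -- final assembly
  calc |X + h x₀ * J + Y - h x₀ * sq|
      ≤ |X + h x₀ * (J - sq)| + |Y| := by
        rw [show X + h x₀ * J + Y - h x₀ * sq = (X + h x₀ * (J - sq)) + Y by ring]
        exact abs_add_le _ _
    _ ≤ |X| + |h x₀| * |J - sq| + |Y| := by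
        rw [← abs_mul]
        linarith only [abs_add_le X (h x₀ * (J - sq))]
    _ < ε := by linarith only [hD₁, hD₂, hev2l, hev3l, hXbound, habsJ, hYbound, hε]



lemma taylor2 (f : ℝ → ℝ) (x₀ f'' : ℝ)
    (hd2 : HasDerivAt (deriv f) f'' x₀) (hd1 : deriv f x₀ = 0) (hf'' : f'' ≠ 0)
    (hcont : Continuous f) :
    ∀ ε > (0:ℝ), ∃ δ > (0:ℝ), ∀ x, |x - x₀| ≤ δ →
      |f x - f x₀ - f''/2 * (x - x₀)^2| ≤ ε * (x - x₀)^2 := by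
  intro ε hε
  set ε' := min ε (|f''|/2) with hε'def
  have hε'pos : 0 < ε' := lt_min hε (by positivity)
  have hε'lt : ε' < |f''| := lt_of_le_of_lt (min_le_right _ _) (by
    have : 0 < |f''| := abs_pos.mpr hf''
    linarith)
  have hε'le : ε' ≤ ε := min_le_left _ _
  have hlo := (hasDerivAt_iff_isLittleO.mp hd2).def hε'pos
  rw [Metric.eventually_nhds_iff] at hlo
  obtain ⟨δ₀, hδ₀, hball⟩ := hlo
  refine ⟨δ₀/2, by positivity, ?_⟩
  have key : ∀ y, |y - x₀| ≤ δ₀/2 → |deriv f y - f'' * (y - x₀)| ≤ ε' * |y - x₀| := by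
    intro y hy
    have : dist y x₀ < δ₀ := by
      rw [Real.dist_eq]; linarith [abs_nonneg (y - x₀)]
    have := hball this
    simp only [hd1, Real.norm_eq_abs, sub_zero, smul_eq_mul] at this
    calc |deriv f y - f'' * (y - x₀)| = |deriv f y - (y - x₀) * f''| := by ring_nf
      _ ≤ ε' * |y - x₀| := this
  have hdiff : ∀ y, y ≠ x₀ → |y - x₀| ≤ δ₀/2 → HasDerivAt f (deriv f y) y := by
    intro y hy hyd
    have hne : deriv f y ≠ 0 := by
      intro h0
      have := key y hyd
      rw [h0, zero_sub, abs_neg, abs_mul] at this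
      have hpos : 0 < |y - x₀| := abs_pos.mpr (sub_ne_zero.mpr hy)
      nlinarith
    have : DifferentiableAt ℝ f y := by
      by_contra hnd
      exact hne (deriv_zero_of_not_differentiableAt hnd)
    exact this.hasDerivAt
  intro x hx
  rcases eq_or_ne x x₀ with rfl | hne
  · simp
  set φ : ℝ → ℝ := fun t => f t - f''/2 * (t - x₀)^2 with hφ
  have hφc : Continuous φ := by
    apply hcont.sub; continuity
  have hφd : ∀ t, t ≠ x₀ → |t - x₀| ≤ δ₀/2 →
      HasDerivAt φ (deriv f t - f'' * (t - x₀)) t := by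
    intro t ht htd
    have h1 := hdiff t ht htd
    have h2 : HasDerivAt (fun t => f''/2 * (t - x₀)^2) (f''/2 * (2 * (t - x₀))) t := by
      have : HasDerivAt (fun t : ℝ => (t - x₀)^2) (2 * (t - x₀)^1 * 1) t :=
        (((hasDerivAt_id t).sub_const x₀).pow 2)
      simpa using this.const_mul (f''/2)
    have : HasDerivAt (fun t => f t - f''/2 * (t - x₀)^2) (deriv f t - f''/2 * (2 * (t - x₀))) t :=
      h1.sub h2
    convert this using 1
    ring
  have goal2 : |φ x - φ x₀| ≤ ε' * (x - x₀)^2 := by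
    rcases lt_or_gt_of_ne hne with hlt | hgt
    · -- x < x₀
      obtain ⟨ξ, hξ, hslope⟩ := exists_hasDerivAt_eq_slope φ
        (fun t => deriv f t - f'' * (t - x₀)) hlt (hφc.continuousOn)
        (fun t ht => hφd t (ne_of_lt ht.2) (by
          rw [abs_le] at hx ⊢
          exact ⟨by linarith [ht.1, ht.2, hx.1], by linarith [ht.1, ht.2, hx.2]⟩))
      have hξb : |ξ - x₀| ≤ |x - x₀| := by
        rw [abs_le]
        refine ⟨?_, ?_⟩
        · have := neg_abs_le (x - x₀); linarith [hξ.1]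
        · have := abs_nonneg (x - x₀); linarith [hξ.2]
      have hkey := key ξ (le_trans hξb hx)
      have hd0 : x₀ - x ≠ 0 := sub_ne_zero.mpr (ne_of_gt hlt)
      rw [eq_div_iff hd0] at hslope
      have hthis : φ x₀ - φ x = (deriv f ξ - f'' * (ξ - x₀)) * (x₀ - x) := hslope.symm
      calc |φ x - φ x₀| = |φ x₀ - φ x| := by rw [abs_sub_comm]
        _ = |deriv f ξ - f'' * (ξ - x₀)| * |x₀ - x| := by rw [hthis, abs_mul]
        _ ≤ (ε' * |x - x₀|) * |x₀ - x| := by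
            apply mul_le_mul_of_nonneg_right (le_trans hkey ?_) (abs_nonneg _)
            exact mul_le_mul_of_nonneg_left hξb (le_of_lt hε'pos)
        _ = ε' * (x - x₀)^2 := by
            rw [abs_sub_comm x₀ x, mul_assoc, ← abs_mul, ← sq,
              abs_of_nonneg (sq_nonneg _)]
    · -- x₀ < x
      obtain ⟨ξ, hξ, hslope⟩ := exists_hasDerivAt_eq_slope φ
        (fun t => deriv f t - f'' * (t - x₀)) hgt (hφc.continuousOn)
        (fun t ht => hφd t (ne_of_gt ht.1) (by
          rw [abs_le] at hx ⊢
          exact ⟨by linarith [ht.1, ht.2, hx.1], by linarith [ht.1, ht.2, hx.2]⟩))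
      have hξb : |ξ - x₀| ≤ |x - x₀| := by
        rw [abs_le]
        refine ⟨?_, ?_⟩
        · have := abs_nonneg (x - x₀); linarith [hξ.1]
        · have := le_abs_self (x - x₀); linarith [hξ.2]
      have hkey := key ξ (le_trans hξb hx)
      have hd0 : x - x₀ ≠ 0 := sub_ne_zero.mpr (ne_of_gt hgt)
      rw [eq_div_iff hd0] at hslope
      have hthis : φ x - φ x₀ = (deriv f ξ - f'' * (ξ - x₀)) * (x - x₀) := hslope.symm
      calc |φ x - φ x₀| = |deriv f ξ - f'' * (ξ - x₀)| * |x - x₀| := by rw [hthis, abs_mul]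
        _ ≤ (ε' * |x - x₀|) * |x - x₀| := by
            apply mul_le_mul_of_nonneg_right (le_trans hkey ?_) (abs_nonneg _)
            exact mul_le_mul_of_nonneg_left hξb (le_of_lt hε'pos)
        _ = ε' * (x - x₀)^2 := by
            rw [mul_assoc, ← abs_mul, ← sq, abs_of_nonneg (sq_nonneg _)]
  have heq : φ x - φ x₀ = f x - f x₀ - f''/2 * (x - x₀)^2 := by
    simp only [hφ]; ring
  calc |f x - f x₀ - f''/2 * (x - x₀)^2| = |φ x - φ x₀| := by rw [heq]
    _ ≤ ε' * (x - x₀)^2 := goal2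
    _ ≤ ε * (x - x₀)^2 := mul_le_mul_of_nonneg_right hε'le (sq_nonneg _)


/-- The classical Laplace method: if `f ≤ 0` is continuous with a strict global maximum at
`x₀ > 0`, `f'(x₀) = 0`, `f''(x₀) < 0`, `h` is continuous with `h x₀ ≠ 0`, the integrals
converge, and `f` stays away from its maximum away from `x₀` (localization), then as `λ → ∞`,
`∫₀^∞ h(x) e^{λ f(x)} dx ~ h(x₀) e^{λ f(x₀)} √(2π/(λ|f''(x₀)|))`. -/
theorem laplace_method (h f : ℝ → ℝ) (x₀ f'' : ℝ)
    (hh : Continuous h) (hf : Continuous f)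
    (hfneg : ∀ x, f x ≤ 0)
    (hx₀ : 0 < x₀)
    (hmax : ∀ x, x ≠ x₀ → f x < f x₀)
    (hderiv : deriv f x₀ = 0)
    (hderiv2 : HasDerivAt (deriv f) f'' x₀)
    (hf''neg : f'' < 0)
    (hhx₀ : h x₀ ≠ 0)
    (hint : ∀ l : ℝ, 0 < l →
      IntegrableOn (fun x => h x * Real.exp (l * f x)) (Set.Ioi 0))
    (hloc : ∀ δ > (0:ℝ), ∃ ε > (0:ℝ), ∀ x, 0 ≤ x → δ ≤ |x - x₀| → f x ≤ f x₀ - ε) :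
    Tendsto (fun l : ℝ =>
        (∫ x in Set.Ioi (0:ℝ), h x * Real.exp (l * f x)) /
          (h x₀ * Real.exp (l * f x₀) * Real.sqrt (2 * π / (l * |f''|))))
      atTop (nhds 1) := by
  have hc : (0:ℝ) < -f'' := by linarith
  have habs : |f''| = -f'' := abs_of_neg hf''neg
  have htay' : ∀ ε > (0:ℝ), ∃ δ > (0:ℝ), ∀ x, |x - x₀| ≤ δ →
      |f x - f x₀ - (-(-f''))/2 * (x - x₀)^2| ≤ ε * (x - x₀)^2 := by
    intro ε hε
    obtain ⟨δ, hδ, hP⟩ := taylor2 f x₀ f'' hderiv2 hderiv (ne_of_lt hf''neg) hf ε hε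
    exact ⟨δ, hδ, fun x hx => by rw [neg_neg]; exact hP x hx⟩
  have hmain := laplace_main h f x₀ (-f'') hh hf hx₀ hc htay' hint hloc
  have hsqpos : (0:ℝ) < Real.sqrt (2 * π / (-f'')) := Real.sqrt_pos.mpr (by positivity)
  have hA : h x₀ * Real.sqrt (2 * π / (-f'')) ≠ 0 := mul_ne_zero hhx₀ (ne_of_gt hsqpos)
  have htends1 : Tendsto (fun l : ℝ =>
      (Real.sqrt l * ∫ x in Set.Ioi (0:ℝ), h x * rexp (l * (f x - f x₀)))
        / (h x₀ * Real.sqrt (2 * π / (-f'')))) atTop (nhds 1) := by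
    have := hmain.div_const (h x₀ * Real.sqrt (2 * π / (-f'')))
    rwa [div_self hA] at this
  apply htends1.congr'
  filter_upwards [eventually_gt_atTop (0:ℝ)] with l hl
  have hsl : Real.sqrt l ≠ 0 := ne_of_gt (Real.sqrt_pos.mpr hl)
  have he : rexp (l * f x₀) ≠ 0 := Real.exp_ne_zero _
  have ha : ∫ x in Set.Ioi (0:ℝ), h x * rexp (l * f x)
      = rexp (l * f x₀) * ∫ x in Set.Ioi (0:ℝ), h x * rexp (l * (f x - f x₀)) := by
    rw [← integral_const_mul]
    apply integral_congr_ae (Eventually.of_forall fun x => ?_)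
    show h x * rexp (l * f x) = rexp (l * f x₀) * (h x * rexp (l * (f x - f x₀)))
    rw [show rexp (l * f x₀) * (h x * rexp (l * (f x - f x₀)))
        = h x * (rexp (l * f x₀) * rexp (l * (f x - f x₀))) by ring, ← Real.exp_add]
    congr 1
    ring
  have hb : Real.sqrt (2 * π / (l * |f''|))
      = Real.sqrt (2 * π / (-f'')) / Real.sqrt l := by
    rw [habs, show 2 * π / (l * -f'') = (2 * π / (-f'')) / l by
        field_simp,
      Real.sqrt_div (by positivity) l]
  rw [ha, hb]
  field_simp
end
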